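/- arXiv:1604.06139 — 3 statements merged into one kernel-verified Lean document; each statement's English description precedes it below -/
import Mathlib

section
/- There exists a convergent, forward-closed rewrite system R and a rule ρ ∈ R whose left-hand side is reducible by another rule of R, such that R \ {ρ} is convergent and equivalent to R but is not forward-closed. (Witness: R = { f(x, i(x)) → g(x), g(b) → c, f(b, i(b)) → c } with ρ the third rule.) -/
/-! Basic first-order terms, positions, substitutions and rewriting. -/

inductive Term (F : Type) : Type
  | var : Nat → Term F
  | app : F → List (Term F) → Term F

namespace Term

def subst {F : Type} (σ : Nat → Term F) : Term F → Term F
  | var n => σ n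
  | app f ts => app f (ts.attach.map fun ⟨t, _⟩ => t.subst σ)

def root {F : Type} : Term F → Option F
  | var _ => none
  | app f _ => some f

def label {F : Type} : Term F → F ⊕ Nat
  | var n => Sum.inr n
  | app f _ => Sum.inl f

def IsVar {F : Type} : Term F → Prop
  | var _ => True
  | app _ _ => False

def varsL {F : Type} : Term F → List Nat
  | var n => [n]
  | app _ ts => (ts.attach.map fun ⟨t, _⟩ => t.varsL).flatten

end Term

abbrev Rule (F : Type) := Term F × Term F
abbrev TRS (F : Type) := Set (Rule F)

/-- `SubtermAt t p u` : the subterm of `t` at position `p` is `u`. -/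
inductive SubtermAt {F : Type} : Term F → List Nat → Term F → Prop
  | here (t : Term F) : SubtermAt t [] t
  | there {f : F} {ts : List (Term F)} {i : Nat} {u : Term F} {p : List Nat} {v : Term F} :
      ts[i]? = some u → SubtermAt u p v → SubtermAt (Term.app f ts) (i :: p) v

/-- `ReplaceAt t p v t'` : replacing the subterm of `t` at position `p` by `v` yields `t'`. -/
inductive ReplaceAt {F : Type} : Term F → List Nat → Term F → Term F → Prop
  | here (t u : Term F) : ReplaceAt t [] u u
  | there {f : F} {ts : List (Term F)} {i : Nat} {u : Term F} {p : List Nat} {v w : Term F} :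
      ts[i]? = some u → ReplaceAt u p v w →
      ReplaceAt (Term.app f ts) (i :: p) v (Term.app f (ts.set i w))

variable {F : Type}

/-- One rewrite step using the given rule (at some position, with some substitution). -/
def RuleStep (ρ : Rule F) (s t : Term F) : Prop :=
  ∃ (σ : Nat → Term F) (p : List Nat),
    SubtermAt s p (ρ.1.subst σ) ∧ ReplaceAt s p (ρ.2.subst σ) t

def OneStep (R : TRS F) (s t : Term F) : Prop := ∃ ρ ∈ R, RuleStep ρ s t

/-- A rewrite step at the root position. -/
def RootStep (R : TRS F) (s t : Term F) : Prop :=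
  ∃ ρ ∈ R, ∃ σ : Nat → Term F, s = ρ.1.subst σ ∧ t = ρ.2.subst σ

def StarRW (R : TRS F) : Term F → Term F → Prop := Relation.ReflTransGen (OneStep R)
def Plus (R : TRS F) : Term F → Term F → Prop := Relation.TransGen (OneStep R)
/-- Convertibility (the congruence / equational theory generated by `R`). -/
def Conv (R : TRS F) : Term F → Term F → Prop := Relation.EqvGen (OneStep R)
def Joinable (R : TRS F) (s t : Term F) : Prop := ∃ u, StarRW R s u ∧ StarRW R t u
def NormalForm (R : TRS F) (t : Term F) : Prop := ∀ u, ¬ OneStep R t u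
/-- `t` is the `R`-normal form of `s`. -/
def NFof (R : TRS F) (s t : Term F) : Prop := StarRW R s t ∧ NormalForm R t
def Terminating (R : TRS F) : Prop := WellFounded (fun a b : Term F => OneStep R b a)
def Confluent (R : TRS F) : Prop := ∀ s t u, StarRW R s t → StarRW R s u → Joinable R t u
def Convergent (R : TRS F) : Prop := Confluent R ∧ Terminating R

/-- every proper subterm is irreducible -/
def EpsIrreducible (R : TRS F) (t : Term F) : Prop :=
  ∀ p u, SubtermAt t p u → p ≠ [] → NormalForm R u

def InnermostRedex (R : TRS F) (t : Term F) : Prop :=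
  EpsIrreducible R t ∧ ¬ NormalForm R t

/-- Forward-closed, via the one-step-to-normal-form characterization. -/
def FCclosed (R : TRS F) : Prop :=
  ∀ t, InnermostRedex R t → ∀ u, NFof R t u → OneStep R t u

def Unifies (σ : Nat → Term F) (s t : Term F) : Prop := s.subst σ = t.subst σ

def IsMGU (σ : Nat → Term F) (s t : Term F) : Prop :=
  Unifies σ s t ∧ ∀ τ, Unifies τ s t → ∃ δ, ∀ x, τ x = (σ x).subst δ

def IsRenaming (ρ : Nat → Term F) : Prop :=
  ∃ f : Nat → Nat, Function.Injective f ∧ ∀ n, ρ n = Term.var (f n)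

/-- Redundancy criterion for an oriented equation `e` whose right-hand side is
reachable from its left-hand side: some proper subterm of the lhs is reducible. -/
def Redundant (R : TRS F) (e : Rule F) : Prop :=
  ∃ p u, p ≠ ([] : List Nat) ∧ SubtermAt e.1 p u ∧ ¬ NormalForm R u

/-- `R₁ ↝ R₂`: forward overlaps of rules of `R₂` (renamed apart) into
right-hand sides of rules of `R₁`, at non-variable positions, via an mgu. -/
def FStep (R₁ R₂ : TRS F) : TRS F :=
  { e | ∃ (l₁ r₁ l₂ r₂ : Term F) (ρ : Nat → Term F) (p : List Nat) (u : Term F)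
          (σ : Nat → Term F) (r₁' : Term F),
      (l₁, r₁) ∈ R₁ ∧ (l₂, r₂) ∈ R₂ ∧ IsRenaming ρ ∧
      SubtermAt r₁ p u ∧ ¬ u.IsVar ∧ IsMGU σ u (l₂.subst ρ) ∧
      ReplaceAt r₁ p (r₂.subst ρ) r₁' ∧ e = (l₁.subst σ, r₁'.subst σ) }

def FCiter (R : TRS F) : Nat → TRS F
  | 0 => R
  | k + 1 => FCiter R k ∪ { e | e ∈ FStep (FCiter R k) R ∧ ¬ Redundant (FCiter R k) e }

def FCinf (R : TRS F) : TRS F := ⋃ k, FCiter R k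

/-- Forward-closed, via the forward-closure construction: `FC(R) = R`. -/
def ForwardClosedFC (R : TRS F) : Prop := FCinf R = R

/-- `RHS(R)`: `R` together with the conclusions of right-hand-side critical
pair inferences (second rule renamed apart). -/
def RHSset (R : TRS F) : TRS F :=
  R ∪ { e | ∃ (s t u₀ v₀ : Term F) (ρ σ : Nat → Term F), (s, t) ∈ R ∧ (u₀, v₀) ∈ R ∧
        IsRenaming ρ ∧ IsMGU σ t (v₀.subst ρ) ∧
        s.subst σ ≠ (u₀.subst ρ).subst σ ∧ e = (s.subst σ, (u₀.subst ρ).subst σ) }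

/-- the (unordered) pairs of root symbols of two equations coincide -/
def RootPairSimilar (e₁ e₂ : Rule F) : Prop :=
  (e₁.1.root = e₂.1.root ∧ e₁.2.root = e₂.2.root) ∨
  (e₁.1.root = e₂.2.root ∧ e₁.2.root = e₂.1.root)

def QuasiDet (E : TRS F) : Prop :=
  (∀ e ∈ E, ¬ e.1.IsVar ∧ ¬ e.2.IsVar) ∧
  (∀ e ∈ E, e.1.root ≠ e.2.root) ∧
  (∀ e₁ ∈ E, ∀ e₂ ∈ E, e₁ ≠ e₂ → ¬ RootPairSimilar e₁ e₂)

def HasRootPairRepetition (E : TRS F) : Prop :=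
  ∃ e₁ ∈ E, ∃ e₂ ∈ E, e₁ ≠ e₂ ∧ RootPairSimilar e₁ e₂

def VarPreserving (R : TRS F) : Prop :=
  ∀ e ∈ R, ∀ n, n ∈ Term.varsL e.1 ↔ n ∈ Term.varsL e.2

def RightReduced (R : TRS F) : Prop := ∀ e ∈ R, NormalForm R e.2

def AlmostLeftReduced (R : TRS F) : Prop :=
  ¬ ∃ (l₁ r₁ l₂ r₂ : Term F) (p : List Nat) (u : Term F) (σ : Nat → Term F),
      (l₁, r₁) ∈ R ∧ (l₂, r₂) ∈ R ∧ p ≠ [] ∧ SubtermAt l₁ p u ∧ u = l₂.subst σ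

def NonSubtermCollapsing (R : TRS F) : Prop :=
  ¬ ∃ (t u : Term F) (p : List Nat), p ≠ [] ∧ SubtermAt u p t ∧ Conv R t u

structure LMSystem (R : TRS F) : Prop where
  convergent : Convergent R
  almostLeftReduced : AlmostLeftReduced R
  rightReduced : RightReduced R
  nonCollapsing : NonSubtermCollapsing R
  forwardClosed : FCclosed R
  quasiDet : QuasiDet (RHSset R)

/-- the symbol (function symbol or variable) of a term at a position, if defined -/
def labelAt {F : Type} : List Nat → Term F → Option (F ⊕ Nat)
  | [], t => some t.label
  | i :: p, Term.app _ ts => ts[i]?.bind (labelAt p)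
  | _ :: _, Term.var _ => none

/-- outermost distinguishing position -/
def ODP (s t : Term F) (p : List Nat) : Prop :=
  (labelAt p s ≠ none ∨ labelAt p t ≠ none) ∧
  labelAt p s ≠ labelAt p t ∧
  ∀ q, q <+: p → q ≠ p → labelAt q s = labelAt q t


inductive Sig5 : Type
  | f | i | g | b | c

namespace Aux
open Term Sig5

/-! ### basic simp lemmas -/

@[simp] theorem subst_app {F} (σ : Nat → Term F) (h : F) (ts : List (Term F)) :
    (Term.app h ts).subst σ = Term.app h (ts.map (Term.subst σ)) := by
  simp [Term.subst]

@[simp] theorem subst_var {F} (σ : Nat → Term F) (n : Nat) :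
    (Term.var n).subst σ = σ n := by simp [Term.subst]

/-! ### term induction -/

theorem term_ind {F} {P : Term F → Prop} (hv : ∀ n, P (.var n))
    (ha : ∀ h ts, (∀ t ∈ ts, P t) → P (.app h ts)) : ∀ t, P t := fun t =>
  Term.rec (motive_1 := P) (motive_2 := fun l => ∀ t ∈ l, P t) hv ha
    (by simp) (fun hd tl h1 h2 t ht => by
      rcases List.mem_cons.mp ht with h | h
      · exact h ▸ h1
      · exact h2 t h) t

/-! ### list helpers -/

theorem get?_some_lt {α} : ∀ (l : List α) (i : Nat) (a : α), l[i]? = some a → i < l.length := by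
  intro l i a h
  cases hl : l[i]? with
  | none => rw [hl] at h; exact absurd h (by simp)
  | some b => exact List.getElem?_eq_some_iff.mp hl |>.1

theorem get?_set_self {α} : ∀ (l : List α) (i : Nat) (a b : α), l[i]? = some a →
    (l.set i b)[i]? = some b := by
  intro l i a b h
  have := get?_some_lt l i a h
  simp [List.getElem?_set_self, this]

theorem set_get? {α} : ∀ (l : List α) (i : Nat) (a : α), l[i]? = some a → l.set i a = l := by
  intro l
  induction l with
  | nil => intro i a h; simp at h
  | cons x xs ih =>
    intro i a h
    cases i with
    | zero => simp at h; simp [h]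
    | succ j =>
      simp only [List.set_cons_succ, List.cons.injEq, true_and]
      exact ih j a (by simpa using h)

theorem get?_mem' {α} {l : List α} {i : Nat} {a : α} (h : l[i]? = some a) : a ∈ l :=
  by obtain ⟨hl, rfl⟩ := List.getElem?_eq_some_iff.mp h; exact List.getElem_mem hl

end Aux
namespace Aux

/-! ### SubtermAt / ReplaceAt -/

variable {F : Type}

theorem subterm_nil {t u : Term F} (h : SubtermAt t [] u) : u = t := by cases h; rfl

theorem replace_nil {t v t' : Term F} (h : ReplaceAt t [] v t') : t' = v := by cases h; rfl

theorem subterm_cons {f' : F} {ts : List (Term F)} {i : Nat} {p : List Nat} {u : Term F}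
    (h : SubtermAt (Term.app f' ts) (i :: p) u) :
    ∃ w, ts[i]? = some w ∧ SubtermAt w p u := by
  cases h with | there hg hs => exact ⟨_, hg, hs⟩

theorem replace_cons {f' : F} {ts : List (Term F)} {i : Nat} {p : List Nat} {v t' : Term F}
    (h : ReplaceAt (Term.app f' ts) (i :: p) v t') :
    ∃ w w', ts[i]? = some w ∧ ReplaceAt w p v w' ∧ t' = Term.app f' (ts.set i w') := by
  cases h with | there hg hr => exact ⟨_, _, hg, hr, rfl⟩

theorem exists_replace {t : Term F} {p : List Nat} {u : Term F}
    (h : SubtermAt t p u) : ∀ v, ∃ t', ReplaceAt t p v t' := by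
  induction h with
  | here t => exact fun v => ⟨v, ReplaceAt.here t v⟩
  | there hg _ ih =>
    intro v
    obtain ⟨w', hw'⟩ := ih v
    exact ⟨_, ReplaceAt.there hg hw'⟩

theorem replace_subterm {t : Term F} {p : List Nat} {v t' : Term F}
    (h : ReplaceAt t p v t') : SubtermAt t' p v := by
  induction h with
  | here t u => exact SubtermAt.here u
  | there hg hr ih => exact SubtermAt.there (get?_set_self _ _ _ _ hg) ih

theorem replace_replace {t : Term F} {p : List Nat} {v t' w t'' : Term F}
    (h : ReplaceAt t p v t') (h2 : ReplaceAt t' p w t'') : ReplaceAt t p w t'' := by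
  induction h generalizing t'' with
  | here t u => cases h2 with | here => exact ReplaceAt.here _ _
  | there hg hr ih =>
    obtain ⟨a, a', ha, har, rfl⟩ := replace_cons h2
    rw [get?_set_self _ _ _ _ hg] at ha
    cases ha
    rw [List.set_set]
    exact ReplaceAt.there hg (ih har)

/-! ### lifting steps into contexts -/

theorem lift_one {R : TRS F} {h : F} {ts : List (Term F)} {i : Nat} {u v : Term F}
    (hg : ts[i]? = some u) (hs : OneStep R u v) :
    OneStep R (Term.app h ts) (Term.app h (ts.set i v)) := by
  obtain ⟨ρ, hρ, σ, p, hsub, hrep⟩ := hs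
  exact ⟨ρ, hρ, σ, i :: p, SubtermAt.there hg hsub, ReplaceAt.there hg hrep⟩

theorem lift_star {R : TRS F} {h : F} {ts : List (Term F)} {i : Nat} {u v : Term F}
    (hg : ts[i]? = some u) (hs : StarRW R u v) :
    StarRW R (Term.app h ts) (Term.app h (ts.set i v)) := by
  induction hs with
  | refl => rw [set_get? _ _ _ hg]; exact Relation.ReflTransGen.refl
  | tail _ h1 ih =>
    refine Relation.ReflTransGen.tail ih ?_
    have := lift_one (R := R) (h := h) (get?_set_self ts i u _ hg) h1
    rwa [List.set_set] at this

theorem get?_append_len {α} : ∀ (pre : List α) (a : α) (l : List α),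
    (pre ++ a :: l)[pre.length]? = some a := by
  intro pre a l
  induction pre with
  | nil => rfl
  | cons x xs ih => simpa using ih

theorem set_append_len {α} : ∀ (pre : List α) (a b : α) (l : List α),
    (pre ++ a :: l).set pre.length b = pre ++ b :: l := by
  intro pre a b l
  induction pre with
  | nil => rfl
  | cons x xs ih => simpa using ih

theorem star_args {R : TRS F} {h : F} {ts us : List (Term F)}
    (hst : List.Forall₂ (StarRW R) ts us) :
    ∀ pre, StarRW R (Term.app h (pre ++ ts)) (Term.app h (pre ++ us)) := by
  induction hst with
  | nil => intro pre; exact Relation.ReflTransGen.refl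
  | @cons a b l1 l2 hab _ ih =>
    intro pre
    have s1 : StarRW R (Term.app h (pre ++ a :: l1)) (Term.app h (pre ++ b :: l1)) := by
      have := lift_star (R := R) (h := h) (get?_append_len pre a l1) hab
      rwa [set_append_len] at this
    have s2 := ih (pre ++ [b])
    simp only [List.append_assoc, List.cons_append, List.nil_append] at s2
    exact Relation.ReflTransGen.trans s1 s2

theorem star_args' {R : TRS F} {h : F} {ts us : List (Term F)}
    (hst : List.Forall₂ (StarRW R) ts us) :
    StarRW R (Term.app h ts) (Term.app h us) := by
  simpa using star_args hst []

/-! ### size and termination -/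

def size : Term F → Nat
  | .var _ => 1
  | .app _ ts => 1 + (ts.attach.map fun ⟨t, _⟩ => size t).sum

@[simp] theorem size_app (h : F) (ts : List (Term F)) :
    size (Term.app h ts) = 1 + (ts.map size).sum := by simp [size]

@[simp] theorem size_var (n : Nat) : size (Term.var n : Term F) = 1 := by simp [size]

theorem sum_map_set : ∀ (ts : List (Term F)) (i : Nat) (w w' : Term F),
    ts[i]? = some w →
    ((ts.set i w').map size).sum + size w = (ts.map size).sum + size w' := by
  intro ts
  induction ts with
  | nil => intro i w w' h; simp at h
  | cons x xs ih =>
    intro i w w' h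
    cases i with
    | zero =>
      simp only [List.getElem?_cons_zero, Option.some.injEq] at h
      subst h; simp; omega
    | succ j =>
      simp only [List.getElem?_cons_succ] at h
      have := ih j w w' (by simpa using h)
      simp only [List.set_cons_succ, List.map_cons, List.sum_cons]
      omega

theorem size_replace {t : Term F} {p : List Nat} {v t' u : Term F}
    (h : ReplaceAt t p v t') (hs : SubtermAt t p u) :
    size t' + size u = size t + size v := by
  induction h generalizing u with
  | here t w => rw [subterm_nil hs]; omega
  | @there f ts i w p v w' hg hr ih =>
    obtain ⟨w0, hw0, hsub⟩ := subterm_cons hs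
    rw [hg] at hw0; cases hw0
    have h1 := ih hsub
    have h2 := sum_map_set ts i w w' hg
    simp only [size_app]
    omega

end Aux
namespace Aux
open Term Sig5

def r1 : Rule Sig5 := (.app f [.var 0, .app i [.var 0]], .app g [.var 0])
def r2 : Rule Sig5 := (.app g [.app b []], .app c [])
def r3 : Rule Sig5 := (.app f [.app b [], .app i [.app b []]], .app c [])

def Rfull : TRS Sig5 := {r1, r2, r3}
def Rsmall : TRS Sig5 := {r1, r2}

theorem small_sub : Rsmall ⊆ Rfull := by
  intro x hx
  have : x = r1 ∨ x = r2 := by simpa [Rsmall] using hx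
  rcases this with rfl | rfl <;> simp [Rfull]

theorem one_mono {R R' : TRS Sig5} (h : R ⊆ R') {s t : Term Sig5} :
    OneStep R s t → OneStep R' s t := by
  rintro ⟨ρ, hρ, hr⟩; exact ⟨ρ, h hρ, hr⟩

theorem star_mono {R R' : TRS Sig5} (h : R ⊆ R') {s t : Term Sig5} :
    StarRW R s t → StarRW R' s t := by
  intro hst
  induction hst with
  | refl => exact Relation.ReflTransGen.refl
  | tail _ h1 ih => exact Relation.ReflTransGen.tail ih (one_mono h h1)

/-! ### root patterns -/

def RootPat : Sig5 → List (Term Sig5) → Prop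
  | Sig5.f, ts => ∃ u, ts = [u, .app i [u]]
  | Sig5.g, ts => ts = [.app b []]
  | _, _ => False

open Classical in
noncomputable def mk (h : Sig5) (ts : List (Term Sig5)) : Term Sig5 :=
  if RootPat h ts then
    if h = Sig5.g ∨ ts.head? = some (Term.app Sig5.b []) then Term.app Sig5.c []
    else Term.app Sig5.g [ts.head?.getD (Term.var 0)]
  else Term.app h ts

theorem mk_of_not {h : Sig5} {ts : List (Term Sig5)} (hn : ¬ RootPat h ts) :
    mk h ts = .app h ts := by rw [mk, if_neg hn]

theorem mk_f_b : mk f [.app b [], .app i [.app b []]] = .app c [] := by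
  rw [mk, if_pos ⟨_, rfl⟩, if_pos (by simp)]

theorem mk_f_ne {u : Term Sig5} (hu : u ≠ .app b []) :
    mk f [u, .app i [u]] = .app g [u] := by
  rw [mk, if_pos ⟨_, rfl⟩, if_neg (by simp [hu])]; rfl

theorem mk_g_b : mk g [.app b []] = .app c [] := by
  rw [mk, if_pos (show RootPat g [.app b []] from rfl), if_pos (Or.inl rfl)]

theorem mk_g_ne {v : Term Sig5} (hv : v ≠ .app b []) : mk g [v] = .app g [v] :=
  mk_of_not (by simp [RootPat, hv])

theorem mk_i (ts : List (Term Sig5)) : mk i ts = .app i ts := mk_of_not (by simp [RootPat])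
theorem mk_b (ts : List (Term Sig5)) : mk b ts = .app b ts := mk_of_not (by simp [RootPat])
theorem mk_c (ts : List (Term Sig5)) : mk c ts = .app c ts := mk_of_not (by simp [RootPat])

/-! ### normal form function -/

noncomputable def nf : Term Sig5 → Term Sig5
  | .var n => .var n
  | .app h ts => mk h (ts.attach.map fun ⟨t, _⟩ => nf t)

@[simp] theorem nf_var (n : Nat) : nf (.var n) = .var n := by simp [nf]

@[simp] theorem nf_app (h : Sig5) (ts : List (Term Sig5)) :
    nf (.app h ts) = mk h (ts.map nf) := by simp [nf]

/-! ### good (normal) terms -/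

inductive Good : Term Sig5 → Prop
  | var (n) : Good (.var n)
  | app (h ts) : (∀ t ∈ ts, Good t) → ¬ RootPat h ts → Good (.app h ts)

theorem good_subterm {t : Term Sig5} {p : List Nat} {u : Term Sig5}
    (hg : Good t) (hs : SubtermAt t p u) : Good u := by
  induction hs with
  | here => exact hg
  | there hg' _ ih =>
    cases hg with
    | app h ts hall _ => exact ih (hall _ (get?_mem' hg'))

theorem good_b : Good (.app b [] : Term Sig5) := Good.app _ _ (by simp) (by simp [RootPat])
theorem good_c : Good (.app c [] : Term Sig5) := Good.app _ _ (by simp) (by simp [RootPat])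
theorem good_ib : Good (.app i [.app b []] : Term Sig5) :=
  Good.app _ _ (by simpa using good_b) (by simp [RootPat])

theorem good_normal {t : Term Sig5} (hg : Good t) : NormalForm Rfull t := by
  rintro u ⟨ρ, hρ, σ, p, hsub, -⟩
  have hgl := good_subterm hg hsub
  rcases hρ with h | h | h <;> subst h <;>
    simp only [r1, r2, r3, subst_app, subst_var, List.map] at hgl <;>
    cases hgl with
    | app h ts hall hn => exact hn (by first | exact ⟨_, rfl⟩ | rfl)

theorem not_good_reducible : ∀ t : Term Sig5, ¬ Good t → ∃ u, OneStep Rsmall t u := by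
  refine term_ind (fun n hn => absurd (Good.var n) hn) ?_
  intro h ts ih hn
  by_cases hall : ∀ t ∈ ts, Good t
  · -- root pattern must hold
    have hpat : RootPat h ts := by
      by_contra hp; exact hn (Good.app h ts hall hp)
    cases h with
    | f =>
      simp only [RootPat] at hpat
      obtain ⟨u, rfl⟩ := hpat
      refine ⟨.app g [u], r1, by simp [Rsmall], fun _ => u, [], ?_, ?_⟩
      · have : (r1.1.subst fun _ => u) = .app f [u, .app i [u]] := by simp [r1]
        rw [this]; exact SubtermAt.here _
      · have : (r1.2.subst fun _ => u) = .app g [u] := by simp [r1]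
        rw [this]; exact ReplaceAt.here _ _
    | g =>
      simp only [RootPat] at hpat
      subst hpat
      refine ⟨.app c [], r2, by simp [Rsmall], fun _ => .var 0, [], ?_, ?_⟩
      · have : (r2.1.subst fun _ => (.var 0 : Term Sig5)) = .app g [.app b []] := by simp [r2]
        rw [this]; exact SubtermAt.here _
      · have : (r2.2.subst fun _ => (.var 0 : Term Sig5)) = .app c [] := by simp [r2]
        rw [this]; exact ReplaceAt.here _ _
    | i => exact absurd hpat (by simp [RootPat])
    | b => exact absurd hpat (by simp [RootPat])
    | c => exact absurd hpat (by simp [RootPat])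
  · push_neg at hall
    obtain ⟨t, ht, hbad⟩ := hall
    obtain ⟨v, hv⟩ := ih t ht hbad
    obtain ⟨idx, hidx⟩ := List.getElem?_of_mem ht
    exact ⟨_, lift_one hidx hv⟩

theorem normal_small_good {t : Term Sig5} (hn : NormalForm Rsmall t) : Good t := by
  by_contra hg
  obtain ⟨u, hu⟩ := not_good_reducible t hg
  exact hn u hu

theorem normal_full_small {t : Term Sig5} (hn : NormalForm Rfull t) : NormalForm Rsmall t :=
  fun u hu => hn u (one_mono small_sub hu)

theorem good_iff_full {t : Term Sig5} : Good t ↔ NormalForm Rfull t :=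
  ⟨good_normal, fun h => normal_small_good (normal_full_small h)⟩

theorem good_iff_small {t : Term Sig5} : Good t ↔ NormalForm Rsmall t :=
  ⟨fun h => normal_full_small (good_normal h), normal_small_good⟩

end Aux
namespace Aux
open Term Sig5

theorem good_nf {t : Term Sig5} (hg : Good t) : nf t = t := by
  induction t using term_ind with
  | hv n => simp
  | ha h ts ih =>
    cases hg with
    | app _ _ hall hn =>
      have hmap : ts.map nf = ts := by
        rw [List.map_congr_left (fun t ht => ih t ht (hall t ht))]; simp
      rw [nf_app, hmap, mk_of_not hn]

theorem mk_good {h : Sig5} {us : List (Term Sig5)} (hall : ∀ t ∈ us, Good t) :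
    Good (mk h us) := by
  by_cases hp : RootPat h us
  · cases h with
    | f =>
      simp only [RootPat] at hp
      obtain ⟨u, rfl⟩ := hp
      by_cases hu : u = Term.app b []
      · subst hu; rw [mk_f_b]; exact good_c
      · rw [mk_f_ne hu]
        refine Good.app _ _ (by simpa using hall u (by simp)) ?_
        simp only [RootPat]
        intro hh
        simp only [List.cons.injEq, and_true] at hh
        exact hu hh
    | g =>
      simp only [RootPat] at hp; subst hp
      rw [mk_g_b]; exact good_c
    | i => exact absurd hp (by simp [RootPat])
    | b => exact absurd hp (by simp [RootPat])
    | c => exact absurd hp (by simp [RootPat])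
  · rw [mk_of_not hp]; exact Good.app _ _ hall hp

theorem nf_good : ∀ t : Term Sig5, Good (nf t) := by
  refine term_ind (fun n => by simpa using Good.var n) ?_
  intro h ts ih
  rw [nf_app]
  exact mk_good (by simpa using fun t ht => ih t ht)

theorem mk_star (h : Sig5) (us : List (Term Sig5)) :
    StarRW Rsmall (.app h us) (mk h us) := by
  by_cases hp : RootPat h us
  · cases h with
    | f =>
      simp only [RootPat] at hp
      obtain ⟨u, rfl⟩ := hp
      have s1 : OneStep Rsmall (.app f [u, .app i [u]]) (.app g [u]) := by
        refine ⟨r1, by simp [Rsmall], fun _ => u, [], ?_, ?_⟩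
        · have : (r1.1.subst fun _ => u) = .app f [u, .app i [u]] := by simp [r1]
          rw [this]; exact SubtermAt.here _
        · have : (r1.2.subst fun _ => u) = .app g [u] := by simp [r1]
          rw [this]; exact ReplaceAt.here _ _
      by_cases hu : u = Term.app b []
      · subst hu
        rw [mk_f_b]
        have s2 : OneStep Rsmall (.app g [.app b []]) (.app c []) := by
          refine ⟨r2, by simp [Rsmall], fun _ => .var 0, [], ?_, ?_⟩
          · have : (r2.1.subst fun _ => (.var 0 : Term Sig5)) = .app g [.app b []] := by simp [r2]
            rw [this]; exact SubtermAt.here _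
          · have : (r2.2.subst fun _ => (.var 0 : Term Sig5)) = .app c [] := by simp [r2]
            rw [this]; exact ReplaceAt.here _ _
        exact Relation.ReflTransGen.tail (Relation.ReflTransGen.single s1) s2
      · rw [mk_f_ne hu]; exact Relation.ReflTransGen.single s1
    | g =>
      simp only [RootPat] at hp; subst hp
      rw [mk_g_b]
      refine Relation.ReflTransGen.single ⟨r2, by simp [Rsmall], fun _ => .var 0, [], ?_, ?_⟩
      · have : (r2.1.subst fun _ => (.var 0 : Term Sig5)) = .app g [.app b []] := by simp [r2]
        rw [this]; exact SubtermAt.here _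
      · have : (r2.2.subst fun _ => (.var 0 : Term Sig5)) = .app c [] := by simp [r2]
        rw [this]; exact ReplaceAt.here _ _
    | i => exact absurd hp (by simp [RootPat])
    | b => exact absurd hp (by simp [RootPat])
    | c => exact absurd hp (by simp [RootPat])
  · rw [mk_of_not hp]; exact Relation.ReflTransGen.refl

theorem nf_star_small : ∀ t : Term Sig5, StarRW Rsmall t (nf t) := by
  refine term_ind (fun n => by rw [nf_var]; exact Relation.ReflTransGen.refl) ?_
  intro h ts ih
  rw [nf_app]
  have h1 : StarRW Rsmall (.app h ts) (.app h (ts.map nf)) := by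
    exact star_args' (List.forall₂_map_right_iff.mpr (List.forall₂_same.mpr fun t ht => ih t ht))
  exact Relation.ReflTransGen.trans h1 (mk_star h (ts.map nf))

theorem nf_star_full (t : Term Sig5) : StarRW Rfull t (nf t) :=
  star_mono small_sub (nf_star_small t)

end Aux
namespace Aux
open Term Sig5

theorem nf_rule (ρ : Rule Sig5) (hρ : ρ ∈ Rfull) (σ : Nat → Term Sig5) :
    nf (ρ.1.subst σ) = nf (ρ.2.subst σ) := by
  rcases hρ with h | h | h <;> subst h
  · -- r1
    simp only [r1, subst_app, subst_var, List.map, nf_app, mk_i]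
    by_cases hb : nf (σ 0) = Term.app b []
    · rw [hb, mk_f_b, mk_g_b]
    · rw [mk_f_ne hb, mk_g_ne hb]
  · simp only [r2, subst_app, List.map_nil, List.map, nf_app, mk_b, mk_g_b, mk_c]
  · simp only [r3, subst_app, List.map_nil, List.map, nf_app, mk_b, mk_i, mk_f_b, mk_c]

theorem nf_replace {s : Term Sig5} {p : List Nat} {v t u : Term Sig5}
    (hrep : ReplaceAt s p v t) (hsub : SubtermAt s p u) (heq : nf u = nf v) :
    nf s = nf t := by
  induction hrep generalizing u with
  | here s w => rw [subterm_nil hsub] at heq; exact heq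
  | @there f' ts idx w p v w' hg hr ih =>
    obtain ⟨w0, hw0, hs⟩ := subterm_cons hsub
    rw [hg] at hw0; cases hw0
    have h1 : nf w = nf w' := ih hs heq
    rw [nf_app, nf_app, List.map_set]
    congr 1
    refine (set_get? _ _ _ ?_).symm
    rw [List.getElem?_map, hg]; simp [h1]

theorem nf_one {s t : Term Sig5} (h : OneStep Rfull s t) : nf s = nf t := by
  obtain ⟨ρ, hρ, σ, p, hsub, hrep⟩ := h
  exact nf_replace hrep hsub (nf_rule ρ hρ σ)

theorem nf_star {s t : Term Sig5} (h : StarRW Rfull s t) : nf s = nf t := by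
  induction h with
  | refl => rfl
  | tail _ h1 ih => rw [ih, nf_one h1]

theorem nf_one_small {s t : Term Sig5} (h : OneStep Rsmall s t) : nf s = nf t :=
  nf_one (one_mono small_sub h)

theorem nf_star_small_eq {s t : Term Sig5} (h : StarRW Rsmall s t) : nf s = nf t :=
  nf_star (star_mono small_sub h)

/-! ### convergence -/

theorem confluent_full : Confluent Rfull := by
  intro s t u hst hsu
  refine ⟨nf s, ?_, ?_⟩
  · rw [nf_star hst]; exact nf_star_full t
  · rw [nf_star hsu]; exact nf_star_full u

theorem confluent_small : Confluent Rsmall := by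
  intro s t u hst hsu
  refine ⟨nf s, ?_, ?_⟩
  · rw [nf_star_small_eq hst]; exact nf_star_small t
  · rw [nf_star_small_eq hsu]; exact nf_star_small u

theorem step_size {s t : Term Sig5} (h : OneStep Rfull s t) : size t < size s := by
  obtain ⟨ρ, hρ, σ, p, hsub, hrep⟩ := h
  have key := size_replace hrep hsub
  have hlt : size (ρ.2.subst σ) < size (ρ.1.subst σ) := by
    rcases hρ with h | h | h <;> subst h <;>
      simp [r1, r2, r3, size_app] <;> omega
  omega

theorem terminating_full : Terminating Rfull :=
  Subrelation.wf (fun h => step_size h) (InvImage.wf size Nat.lt_wfRel.wf)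

theorem terminating_small : Terminating Rsmall :=
  Subrelation.wf (fun h => step_size (one_mono small_sub h))
    (InvImage.wf size Nat.lt_wfRel.wf)

theorem convergent_full : Convergent Rfull := ⟨confluent_full, terminating_full⟩
theorem convergent_small : Convergent Rsmall := ⟨confluent_small, terminating_small⟩

/-! ### normal forms are unique and given by nf -/

theorem nfof_full {s u : Term Sig5} (h : NFof Rfull s u) : u = nf s := by
  obtain ⟨hstar, hnorm⟩ := h
  have := nf_star hstar
  rw [← good_nf (good_iff_full.mpr hnorm), this]

theorem nfof_small {s u : Term Sig5} (h : NFof Rsmall s u) : u = nf s := by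
  obtain ⟨hstar, hnorm⟩ := h
  have := nf_star_small_eq hstar
  rw [← good_nf (good_iff_small.mpr hnorm), this]

end Aux
namespace Aux
open Term Sig5

theorem replace_swap {t : Term Sig5} {p : List Nat} {v t' w t'' : Term Sig5}
    (h : ReplaceAt t p v t') (h2 : ReplaceAt t p w t'') : ReplaceAt t' p w t'' := by
  induction h generalizing t'' with
  | here t u => rw [replace_nil h2]; exact ReplaceAt.here _ _
  | @there f' ts idx u p v w1 hg hr ih =>
    obtain ⟨a, a', ha, har, rfl⟩ := replace_cons h2
    rw [hg] at ha; cases ha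
    have hss : ts.set idx a' = (ts.set idx w1).set idx a' := (List.set_set _).symm
    rw [hss]
    exact ReplaceAt.there (get?_set_self _ _ _ _ hg) (ih har)

/-- a closed root step helper -/
theorem root_step {R : TRS Sig5} {ρ : Rule Sig5} (hρ : ρ ∈ R) (σ : Nat → Term Sig5)
    {s t : Term Sig5} (hs : ρ.1.subst σ = s) (ht : ρ.2.subst σ = t) : OneStep R s t := by
  subst hs; subst ht
  exact ⟨ρ, hρ, σ, [], SubtermAt.here _, ReplaceAt.here _ _⟩

theorem lsub_reducible {ρ : Rule Sig5} {R : TRS Sig5} (hρ : ρ ∈ R) (σ : Nat → Term Sig5) :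
    ¬ NormalForm R (ρ.1.subst σ) := by
  intro hn
  exact hn (ρ.2.subst σ) ⟨ρ, hρ, σ, [], SubtermAt.here _, ReplaceAt.here _ _⟩

theorem fcclosed_full : FCclosed Rfull := by
  rintro t ⟨heps, hred⟩ u hnf
  -- t is reducible
  have : ∃ v, OneStep Rfull t v := by
    by_contra hc; push_neg at hc; exact hred (fun v => hc v)
  obtain ⟨v, ρ, hρ, σ, p, hsub, hrep⟩ := this
  -- the step must be at the root
  have hp : p = [] := by
    cases p with
    | nil => rfl
    | cons j q =>
      exact absurd (heps _ _ hsub (by simp)) (lsub_reducible hρ σ)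
  subst hp
  have ht : t = ρ.1.subst σ := (subterm_nil hsub).symm
  have hu : u = nf t := nfof_full hnf
  rcases hρ with h | h | h <;> subst h
  · -- r1 : t = f (σ0, i (σ0))
    simp only [r1, subst_app, subst_var, List.map] at ht
    have hs0 : NormalForm Rfull (σ 0) := by
      refine heps [0] (σ 0) ?_ (by simp)
      rw [ht]
      exact SubtermAt.there (by rfl) (SubtermAt.here _)
    have hnfs0 : nf (σ 0) = σ 0 := good_nf (good_iff_full.mpr hs0)
    have hnft : nf t = mk f [σ 0, .app i [σ 0]] := by
      rw [ht, nf_app]; simp [mk_i, hnfs0]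
    by_cases hb : σ 0 = Term.app b []
    · refine root_step (show r3 ∈ Rfull by simp [Rfull]) σ ?_ ?_
      · simp [r3, ht, hb]
      · rw [hu, hnft, hb, mk_f_b]; simp [r3]
    · refine root_step (show r1 ∈ Rfull by simp [Rfull]) σ ?_ ?_
      · simp [r1, ht]
      · rw [hu, hnft, mk_f_ne hb]; simp [r1]
  · -- r2 : t = g(b)
    simp only [r2, subst_app, List.map_nil, List.map] at ht
    refine root_step (show r2 ∈ Rfull by simp [Rfull]) σ ?_ ?_
    · simp [r2, ht]
    · rw [hu, ht]; simp [mk_b, mk_g_b, r2]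
  · -- r3 : t = f(b, i(b))
    simp only [r3, subst_app, List.map_nil, List.map] at ht
    refine root_step (show r3 ∈ Rfull by simp [Rfull]) σ ?_ ?_
    · simp [r3, ht]
    · rw [hu, ht]; simp [mk_b, mk_i, mk_f_b, r3]

/-! ### Conv equivalence -/

theorem star_conv {R : TRS Sig5} {s t : Term Sig5} (h : StarRW R s t) : Conv R s t := by
  induction h with
  | refl => exact Relation.EqvGen.refl _
  | tail _ h1 ih => exact Relation.EqvGen.trans _ _ _ ih (Relation.EqvGen.rel _ _ h1)

theorem one_conv_small {a c' : Term Sig5} (h : OneStep Rfull a c') : Conv Rsmall a c' := by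
  obtain ⟨ρ, hρ, σ, p, hsub, hrep⟩ := h
  rcases hρ with h | h | h
  · exact Relation.EqvGen.rel _ _ ⟨ρ, by simp [Rsmall, h], σ, p, hsub, hrep⟩
  · exact Relation.EqvGen.rel _ _ ⟨ρ, by simp [Rsmall, h], σ, p, hsub, hrep⟩
  · -- rule r3: simulate by two Rsmall steps
    subst h
    simp only [r3, subst_app, List.map_nil, List.map] at hsub hrep
    obtain ⟨a', ha'⟩ := exists_replace hsub (Term.app g [Term.app b []])
    have s1 : OneStep Rsmall a a' :=
      ⟨r1, by simp [Rsmall], fun _ => .app b [], p, by simpa [r1] using hsub,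
        by simpa [r1] using ha'⟩
    have s2 : OneStep Rsmall a' c' :=
      ⟨r2, by simp [Rsmall], fun _ => .var 0, p, by simpa [r2] using replace_subterm ha',
        by simpa [r2] using replace_swap ha' hrep⟩
    exact Relation.EqvGen.trans _ _ _ (Relation.EqvGen.rel _ _ s1) (Relation.EqvGen.rel _ _ s2)

theorem conv_iff (a c' : Term Sig5) : Conv Rsmall a c' ↔ Conv Rfull a c' := by
  constructor
  · intro h
    induction h with
    | rel x y h => exact Relation.EqvGen.rel _ _ (one_mono small_sub h)
    | refl x => exact Relation.EqvGen.refl _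
    | symm x y _ ih => exact Relation.EqvGen.symm _ _ ih
    | trans x y z _ _ ih1 ih2 => exact Relation.EqvGen.trans _ _ _ ih1 ih2
  · intro h
    induction h with
    | rel x y h => exact one_conv_small h
    | refl x => exact Relation.EqvGen.refl _
    | symm x y _ ih => exact Relation.EqvGen.symm _ _ ih
    | trans x y z _ _ ih1 ih2 => exact Relation.EqvGen.trans _ _ _ ih1 ih2

end Aux
namespace Aux
open Term Sig5

def t0 : Term Sig5 := .app f [.app b [], .app i [.app b []]]

theorem sub_t0 {p : List Nat} {u : Term Sig5} (h : SubtermAt t0 p u) (hp : p ≠ []) :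
    u = .app b [] ∨ u = .app i [.app b []] := by
  cases p with
  | nil => exact absurd rfl hp
  | cons j q =>
    obtain ⟨w, hw, hsub⟩ := subterm_cons h
    match j with
    | 0 =>
      simp only [t0, List.getElem?_cons_zero, Option.some.injEq] at hw
      subst hw
      cases q with
      | nil => exact Or.inl (subterm_nil hsub)
      | cons j' q' =>
        obtain ⟨w', hw', -⟩ := subterm_cons hsub
        simp at hw'
    | 1 =>
      simp only [t0, List.getElem?_cons_succ,
        List.getElem?_cons_zero, Option.some.injEq] at hw
      subst hw
      cases q with
      | nil => exact Or.inr (subterm_nil hsub)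
      | cons j' q' =>
        obtain ⟨w', hw', hsub'⟩ := subterm_cons hsub
        match j' with
        | 0 =>
          simp only [List.getElem?_cons_zero, Option.some.injEq] at hw'
          subst hw'
          cases q' with
          | nil => exact Or.inl (subterm_nil hsub')
          | cons j'' q'' =>
            obtain ⟨w'', hw'', -⟩ := subterm_cons hsub'
            simp at hw''
        | (n+1) => simp at hw'
    | (n+2) => simp [t0] at hw

theorem step_t0 : OneStep Rsmall t0 (.app g [.app b []]) := by
  refine root_step (show r1 ∈ Rsmall by simp [Rsmall]) (fun _ => .app b []) ?_ ?_ <;>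
    simp [r1, t0]

theorem innermost_t0 : InnermostRedex Rsmall t0 := by
  constructor
  · intro p u hsub hp
    rcases sub_t0 hsub hp with rfl | rfl
    · exact normal_full_small (good_normal good_b)
    · exact normal_full_small (good_normal good_ib)
  · intro hn
    exact hn _ step_t0

theorem nfof_t0 : NFof Rsmall t0 (.app c []) := by
  constructor
  · refine Relation.ReflTransGen.tail (Relation.ReflTransGen.single step_t0) ?_
    exact root_step (show r2 ∈ Rsmall by simp [Rsmall]) (fun _ => .var 0)
      (by simp [r2]) (by simp [r2])
  · exact normal_full_small (good_normal good_c)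

theorem no_step_t0_c : ¬ OneStep Rsmall t0 (.app c []) := by
  rintro ⟨ρ, hρ, σ, p, hsub, hrep⟩
  have hρ' : ρ = r1 ∨ ρ = r2 := by simpa [Rsmall] using hρ
  rcases hρ' with rfl | rfl
  · cases p with
    | nil =>
      have := replace_nil hrep
      simp [r1] at this
    | cons j q =>
      rcases sub_t0 hsub (by simp) with h | h <;> simp [r1] at h
  · cases p with
    | nil =>
      have := subterm_nil hsub
      simp [r2, t0] at this
    | cons j q =>
      rcases sub_t0 hsub (by simp) with h | h <;> simp [r2] at h

theorem not_fcclosed_small : ¬ FCclosed Rsmall := by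
  intro hfc
  exact no_step_t0_c (hfc t0 innermost_t0 _ nfof_t0)

end Aux

open Sig5 in
/-- the witness system { f(x,i(x)) → g(x), g(b) → c, f(b,i(b)) → c } is
convergent and forward-closed, the third rule's lhs is reducible by another rule, and
deleting it preserves convergence and the congruence but destroys forward-closure. -/
theorem full_interreduction_fails :
    ∀ (x : Term Sig5), x = Term.var 0 →
    ∀ (R : TRS Sig5), R = { (Term.app f [x, Term.app i [x]], Term.app g [x]),
        (Term.app g [Term.app b []], Term.app c []),
        (Term.app f [Term.app b [], Term.app i [Term.app b []]], Term.app c []) } →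
    ∀ (rho : Rule Sig5),
      rho = (Term.app f [Term.app b [], Term.app i [Term.app b []]], Term.app c []) →
    Convergent R ∧ FCclosed R ∧
      (∃ t, OneStep (R \ {rho}) rho.1 t) ∧
      Convergent (R \ {rho}) ∧ (∀ a b', Conv (R \ {rho}) a b' ↔ Conv R a b') ∧
      ¬ FCclosed (R \ {rho}) := by
  intro x hx R hR rho hrho
  subst hx
  have hRf : R = Aux.Rfull := by rw [hR]; rfl
  have hrho3 : rho = Aux.r3 := by rw [hrho]; rfl
  have h13 : Aux.r1 ≠ Aux.r3 := by simp [Aux.r1, Aux.r3]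
  have h23 : Aux.r2 ≠ Aux.r3 := by simp [Aux.r2, Aux.r3]
  have hdiff : R \ {rho} = Aux.Rsmall := by
    rw [hRf, hrho3]
    ext e
    simp only [Set.mem_diff, Set.mem_singleton_iff, Aux.Rsmall, Aux.Rfull, Set.mem_insert_iff]
    constructor
    · rintro ⟨h1 | h1 | h1, h2⟩
      · exact Or.inl h1
      · exact Or.inr h1
      · exact absurd h1 h2
    · rintro (h1 | h1)
      · exact ⟨Or.inl h1, h1 ▸ h13⟩
      · exact ⟨Or.inr (Or.inl h1), h1 ▸ h23⟩
  rw [hdiff, hRf, hrho3]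
  refine ⟨Aux.convergent_full, Aux.fcclosed_full, ?_, Aux.convergent_small, ?_,
    Aux.not_fcclosed_small⟩
  · exact ⟨_, Aux.step_t0⟩
  · exact fun a b' => Aux.conv_iff a b'
end

section
/- Suppose R is a variable-preserving, convergent, quasi-deterministic rewrite system. Then RHS(R) fails to be quasi-deterministic if and only if RHS(R) contains a root pair repetition. -/
variable {F : Type}

namespace Term

theorem subst_app' {F : Type} (σ : Nat → Term F) (f : F) (ts : List (Term F)) :
    (app f ts).subst σ = app f (ts.map (·.subst σ)) := by
  simp [subst, List.attach_map]

theorem varsL_app' {F : Type} (f : F) (ts : List (Term F)) :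
    (app f ts).varsL = (ts.map varsL).flatten := by
  simp [varsL, List.attach_map]

theorem subst_subst' {F : Type} (ρ σ : Nat → Term F) :
    ∀ t : Term F, (t.subst ρ).subst σ = t.subst (fun x => (ρ x).subst σ)
  | .var n => by simp [subst]
  | .app f ts => by
    simp only [subst_app', List.map_map]
    congr 1
    apply List.map_congr_left
    intro t ht
    exact subst_subst' ρ σ t
termination_by t => sizeOf t
decreasing_by simp_wf; have := List.sizeOf_lt_of_mem ht; omega

theorem subst_congr' {F : Type} {σ τ : Nat → Term F} :
    ∀ t : Term F, (∀ x ∈ t.varsL, σ x = τ x) → t.subst σ = t.subst τ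
  | .var n, h => by simp only [subst]; exact h n (by simp [varsL])
  | .app f ts, h => by
    simp only [subst_app']
    congr 1
    apply List.map_congr_left
    intro t ht
    refine subst_congr' t (fun x hx => h x ?_)
    rw [varsL_app', List.mem_flatten]
    exact ⟨t.varsL, List.mem_map_of_mem ht, hx⟩
termination_by t => sizeOf t
decreasing_by simp_wf; have := List.sizeOf_lt_of_mem ht; omega

theorem eq_on_vars' {F : Type} {σ τ : Nat → Term F} :
    ∀ t : Term F, t.subst σ = t.subst τ → ∀ x ∈ t.varsL, σ x = τ x
  | .var n, h, x, hx => by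
    simp [varsL] at hx; subst hx; simpa [subst] using h
  | .app f ts, h, x, hx => by
    rw [varsL_app', List.mem_flatten] at hx
    obtain ⟨l, hl, hxl⟩ := hx
    rw [List.mem_map] at hl
    obtain ⟨u, hu, rfl⟩ := hl
    simp only [subst_app', app.injEq, true_and] at h
    have := (List.map_inj_left).mp h u hu
    exact eq_on_vars' u this x hxl
termination_by t => sizeOf t
decreasing_by simp_wf; have := List.sizeOf_lt_of_mem hu; omega

theorem root_subst' {F : Type} {t : Term F} (σ : Nat → Term F) (h : ¬ t.IsVar) :
    (t.subst σ).root = t.root := by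
  cases t with
  | var n => exact absurd trivial h
  | app f ts => rw [subst_app']; rfl

theorem not_isVar_subst' {F : Type} {t : Term F} (σ : Nat → Term F) (h : ¬ t.IsVar) :
    ¬ (t.subst σ).IsVar := by
  cases t with
  | var n => exact absurd trivial h
  | app f ts => rw [subst_app']; exact fun h => h

end Term
/-- for a variable-preserving, convergent, quasi-deterministic `R`,
`RHS(R)` fails to be quasi-deterministic iff it has a root pair repetition. -/
theorem rhs_quasidet_iff {F : Type} (R : TRS F)
    (hvp : VarPreserving R) (hconv : Convergent R) (hqd : QuasiDet R) :
    ¬ QuasiDet (RHSset R) ↔ HasRootPairRepetition (RHSset R) := by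
  constructor
  · intro hnot
    by_contra hrep
    apply hnot
    refine ⟨?_, ?_, ?_⟩
    · -- no variable sides
      rintro e (he | he)
      · exact hqd.1 e he
      · obtain ⟨s, t, u₀, v₀, ρ, σ, hst, huv, hρ, hmgu, hne, rfl⟩ := he
        exact ⟨Term.not_isVar_subst' σ (hqd.1 _ hst).1,
               Term.not_isVar_subst' σ (Term.not_isVar_subst' ρ (hqd.1 _ huv).1)⟩
    · -- distinct roots on each side
      rintro e (he | he)
      · exact hqd.2.1 e he
      · obtain ⟨s, t, u₀, v₀, ρ, σ, hst, huv, hρ, hmgu, hne, rfl⟩ := he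
        have hsnv := (hqd.1 _ hst).1
        have htnv := (hqd.1 _ hst).2
        have hunv := (hqd.1 _ huv).1
        have hvnv := (hqd.1 _ huv).2
        simp only
        rw [Term.root_subst' σ hsnv,
            Term.root_subst' σ (Term.not_isVar_subst' ρ hunv),
            Term.root_subst' ρ hunv]
        intro hroots
        -- roots of t and v₀ coincide since σ unifies t with v₀ρ
        have hroott : t.root = v₀.root := by
          have := congrArg Term.root hmgu.1
          rwa [Term.root_subst' σ htnv,
               Term.root_subst' σ (Term.not_isVar_subst' ρ hvnv),
               Term.root_subst' ρ hvnv] at this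
        have hsim : RootPairSimilar (s, t) (u₀, v₀) := Or.inl ⟨hroots, hroott⟩
        have heq : (s, t) = (u₀, v₀) := by
          by_contra hne'
          exact hqd.2.2 (s, t) hst (u₀, v₀) huv hne' hsim
        obtain ⟨rfl, rfl⟩ := Prod.mk.injEq .. ▸ (Prod.mk.inj heq)
        -- now hmgu.1 : t.subst σ = (t.subst ρ).subst σ, contradict hne
        apply hne
        have h1 : t.subst σ = t.subst (fun x => (ρ x).subst σ) :=
          hmgu.1.trans (Term.subst_subst' ρ σ t)
        have h2 : ∀ x ∈ t.varsL, σ x = (ρ x).subst σ := Term.eq_on_vars' t h1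
        have h3 : s.subst σ = s.subst (fun x => (ρ x).subst σ) :=
          Term.subst_congr' s (fun x hx => h2 x ((hvp _ hst x).mp hx))
        rw [h3, ← Term.subst_subst' ρ σ s]
    · -- no root pair repetition
      intro e₁ h₁ e₂ h₂ hne hsim
      exact hrep ⟨e₁, h₁, e₂, h₂, hne, hsim⟩
  · rintro ⟨e₁, h₁, e₂, h₂, hne, hsim⟩ hqd'
    exact hqd'.2.2 e₁ h₁ e₂ h₂ hne hsim
end

section
/- Let R be an LM-system with a rule whose root pair is (f, g), f ≠ g. Then no term with root symbol g can be reduced modulo R (in one or more steps) to a term with root symbol f. -/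
variable {F : Type}

section Basics
open Term

theorem Term.subst_app (σ : Nat → Term F) (f : F) (ts : List (Term F)) :
    (Term.app f ts).subst σ = Term.app f (ts.map (·.subst σ)) := by
  simp [Term.subst]

theorem Term.varsL_app (f : F) (ts : List (Term F)) :
    (Term.app f ts).varsL = (ts.map varsL).flatten := by
  simp [Term.varsL]

def Term.tsize : Term F → Nat
  | .var _ => 1
  | .app _ ts => 1 + (ts.attach.map fun ⟨t, _⟩ => t.tsize).sum

theorem Term.tsize_app (f : F) (ts : List (Term F)) :
    (Term.app f ts).tsize = 1 + (ts.map tsize).sum := by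
  simp [Term.tsize]

theorem Term.tsize_pos (t : Term F) : 0 < t.tsize := by
  cases t <;> simp [Term.tsize]

theorem Term.tsize_lt_of_mem {t : Term F} {ts : List (Term F)} (h : t ∈ ts) (f : F) :
    t.tsize < (Term.app f ts).tsize := by
  rw [Term.tsize_app]
  have := List.single_le_sum (l := ts.map Term.tsize) (by simp) t.tsize
    (List.mem_map_of_mem h)
  omega

theorem Term.my_ind {P : Term F → Prop} (hv : ∀ n, P (.var n))
    (ha : ∀ f ts, (∀ t ∈ ts, P t) → P (.app f ts)) : ∀ t, P t := by
  have key : ∀ k (t : Term F), t.tsize ≤ k → P t := by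
    intro k
    induction k with
    | zero => intro t ht; have := t.tsize_pos; omega
    | succ k ih =>
      intro t ht
      cases t with
      | var n => exact hv n
      | app f ts =>
        exact ha f ts fun t htm => ih t (by have := Term.tsize_lt_of_mem htm f; omega)
  exact fun t => key t.tsize t le_rfl

theorem Term.subst_subst (σ τ : Nat → Term F) (t : Term F) :
    (t.subst σ).subst τ = t.subst (fun n => (σ n).subst τ) := by
  induction t using Term.my_ind with
  | hv n => simp [Term.subst]
  | ha f ts ih =>
    simp only [Term.subst_app, List.map_map]
    congr 1
    exact List.map_congr_left fun t ht => ih t ht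

theorem Term.subst_congr {σ τ : Nat → Term F} {t : Term F}
    (h : ∀ n ∈ t.varsL, σ n = τ n) : t.subst σ = t.subst τ := by
  induction t using Term.my_ind with
  | hv n => simpa [Term.subst, Term.varsL] using h n (by simp [Term.varsL])
  | ha f ts ih =>
    simp only [Term.subst_app]
    congr 1
    refine List.map_congr_left fun t ht => ih t ht fun n hn => h n ?_
    rw [Term.varsL_app]
    exact List.mem_flatten.2 ⟨t.varsL, List.mem_map_of_mem ht, hn⟩

theorem Term.subst_var (t : Term F) : t.subst Term.var = t := by
  induction t using Term.my_ind with
  | hv n => simp [Term.subst]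
  | ha f ts ih =>
    rw [Term.subst_app]
    conv_rhs => rw [← List.map_id ts]
    exact congrArg _ (List.map_congr_left fun t ht => ih t ht)

theorem Term.subst_id_on {σ : Nat → Term F} {t : Term F}
    (h : ∀ n ∈ t.varsL, σ n = Term.var n) : t.subst σ = t := by
  rw [Term.subst_congr h, Term.subst_var]

theorem Term.mem_varsL_subst {σ : Nat → Term F} {t : Term F} {n : Nat} :
    n ∈ (t.subst σ).varsL ↔ ∃ m ∈ t.varsL, n ∈ (σ m).varsL := by
  induction t using Term.my_ind with
  | hv k => simp [Term.subst, Term.varsL]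
  | ha f ts ih =>
    rw [Term.subst_app, Term.varsL_app, Term.varsL_app]
    simp only [List.mem_flatten, List.mem_map, List.map_map]
    constructor
    · rintro ⟨l, ⟨t, ht, rfl⟩, hn⟩
      obtain ⟨m, hm, hn⟩ := (ih t ht).1 hn
      exact ⟨m, ⟨t.varsL, ⟨t, ht, rfl⟩, hm⟩, hn⟩
    · rintro ⟨m, ⟨l, ⟨t, ht, rfl⟩, hm⟩, hn⟩
      exact ⟨(t.subst σ).varsL, ⟨t, ht, rfl⟩, (ih t ht).2 ⟨m, hm, hn⟩⟩

theorem Term.not_isVar_iff {t : Term F} : ¬ t.IsVar ↔ ∃ f ts, t = Term.app f ts := by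
  cases t <;> simp [Term.IsVar]

theorem Term.root_subst {t : Term F} (h : ¬ t.IsVar) (σ : Nat → Term F) :
    (t.subst σ).root = t.root := by
  obtain ⟨f, ts, rfl⟩ := Term.not_isVar_iff.1 h
  rw [Term.subst_app]; rfl

end Basics

section RW
variable {R : TRS F}

theorem subtermAt_nil {t u : Term F} (h : SubtermAt t [] u) : t = u := by
  cases h; rfl

theorem subtermAt_cons {t u : Term F} {i : Nat} {p : List Nat}
    (h : SubtermAt t (i :: p) u) :
    ∃ f ts w, t = Term.app f ts ∧ ts[i]? = some w ∧ SubtermAt w p u := by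
  cases h with
  | there hget hs => exact ⟨_, _, _, rfl, hget, hs⟩

theorem replaceAt_nil {t v t' : Term F} (h : ReplaceAt t [] v t') : t' = v := by
  cases h; rfl

theorem replaceAt_cons {t v t' : Term F} {i : Nat} {p : List Nat}
    (h : ReplaceAt t (i :: p) v t') :
    ∃ f ts u w, t = Term.app f ts ∧ t' = Term.app f (ts.set i w) ∧
      ts[i]? = some u ∧ ReplaceAt u p v w := by
  cases h with
  | there hget hr => exact ⟨_, _, _, _, rfl, rfl, hget, hr⟩

/-- A step is either a root step or preserves the root. -/
theorem step_root_or_eq {a b : Term F} (h : OneStep R a b) :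
    (∃ ρ ∈ R, ∃ σ : Nat → Term F, a = ρ.1.subst σ ∧ b = ρ.2.subst σ) ∨ a.root = b.root := by
  obtain ⟨ρ, hρ, σ, p, hsub, hrep⟩ := h
  cases p with
  | nil =>
    exact Or.inl ⟨ρ, hρ, σ, subtermAt_nil hsub, replaceAt_nil hrep⟩
  | cons i q =>
    obtain ⟨f, ts, u, w, rfl, rfl, _, _⟩ := replaceAt_cons hrep
    exact Or.inr rfl

theorem SubtermAt.trans' {t u c : Term F} {p q : List Nat}
    (h1 : SubtermAt t p u) (h2 : SubtermAt u q c) : SubtermAt t (p ++ q) c := by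
  induction h1 with
  | here => exact h2
  | there hget _ ih => exact SubtermAt.there hget (ih h2)

theorem ReplaceAt.exists_trans {t u a b : Term F} {p q : List Nat}
    (h1 : SubtermAt t p u) (h2 : ReplaceAt u q a b) :
    ∃ t', ReplaceAt t (p ++ q) a t' := by
  induction h1 with
  | here => exact ⟨b, h2⟩
  | there hget _ ih =>
    obtain ⟨t', ht'⟩ := ih h2
    exact ⟨_, ReplaceAt.there hget ht'⟩

/-- normal forms are closed under subterms -/
theorem nf_subterm {t u : Term F} {p : List Nat} (h : SubtermAt t p u)
    (ht : NormalForm R t) : NormalForm R u := by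
  intro u' hu'
  obtain ⟨ρ, hρ, σ, q, hsub, hrep⟩ := hu'
  obtain ⟨t', ht'⟩ := ReplaceAt.exists_trans h hrep
  exact ht t' ⟨ρ, hρ, σ, p ++ q, SubtermAt.trans' h hsub, ht'⟩

theorem get?_append_cons (pre : List (Term F)) (a : Term F) (post : List (Term F)) :
    (pre ++ a :: post)[pre.length]? = some a := by
  induction pre with
  | nil => rfl
  | cons x xs ih => simpa using ih

theorem set_append_cons (pre : List (Term F)) (a b : Term F) (post : List (Term F)) :
    (pre ++ a :: post).set pre.length b = pre ++ b :: post := by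
  induction pre with
  | nil => rfl
  | cons x xs ih => simp [List.set, ih]

theorem onestep_context {a b : Term F} (h : OneStep R a b) (f : F)
    (pre post : List (Term F)) :
    OneStep R (Term.app f (pre ++ a :: post)) (Term.app f (pre ++ b :: post)) := by
  obtain ⟨ρ, hρ, σ, p, hsub, hrep⟩ := h
  refine ⟨ρ, hρ, σ, pre.length :: p, SubtermAt.there (get?_append_cons ..) hsub, ?_⟩
  have h2 : ReplaceAt (Term.app f (pre ++ a :: post)) (pre.length :: p) (ρ.2.subst σ)
      (Term.app f ((pre ++ a :: post).set pre.length b)) :=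
    ReplaceAt.there (get?_append_cons pre a post) hrep
  rwa [set_append_cons] at h2

theorem star_context {a b : Term F} (h : StarRW R a b) (f : F)
    (pre post : List (Term F)) :
    StarRW R (Term.app f (pre ++ a :: post)) (Term.app f (pre ++ b :: post)) :=
  Relation.ReflTransGen.lift (fun x => Term.app f (pre ++ x :: post))
    (fun _ _ hs => onestep_context hs f pre post) _ _ h

/-- existence of normal forms -/
theorem exists_nf (hT : Terminating R) (t : Term F) : ∃ w, NFof R t w := by
  induction t using hT.induction with
  | _ t ih =>
    by_cases h : NormalForm R t
    · exact ⟨t, Relation.ReflTransGen.refl, h⟩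
    · obtain ⟨u, hu⟩ : ∃ u, OneStep R t u := by
        simpa [NormalForm, not_forall] using h
      obtain ⟨w, hw1, hw2⟩ := ih u hu
      exact ⟨w, Relation.ReflTransGen.head hu hw1, hw2⟩

theorem star_of_nf {a b : Term F} (ha : NormalForm R a) (h : StarRW R a b) : a = b := by
  cases h.cases_head with
  | inl h => exact h
  | inr h => exact absurd h.choose_spec.1 (ha _)

theorem nf_unique (hC : Confluent R) {s w₁ w₂ : Term F}
    (h1 : NFof R s w₁) (h2 : NFof R s w₂) : w₁ = w₂ := by
  obtain ⟨u, hu1, hu2⟩ := hC s w₁ w₂ h1.1 h2.1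
  rw [star_of_nf h1.2 hu1, star_of_nf h2.2 hu2]

theorem plus_of_star_ne {a b : Term F} (h : StarRW R a b) (hne : a ≠ b) : Plus R a b := by
  cases h.cases_head with
  | inl h => exact absurd h hne
  | inr h => exact Relation.TransGen.head' h.choose_spec.1 h.choose_spec.2

/-- normalize a list of terms -/
theorem exists_nf_list (hT : Terminating R) (us : List (Term F)) :
    ∃ ws : List (Term F), (∀ w ∈ ws, NormalForm R w) ∧
      ∀ (f : F) (pre : List (Term F)),
        StarRW R (Term.app f (pre ++ us)) (Term.app f (pre ++ ws)) := by
  induction us with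
  | nil => exact ⟨[], by simp, fun f pre => Relation.ReflTransGen.refl⟩
  | cons u us ih =>
    obtain ⟨v, hv1, hv2⟩ := exists_nf hT u
    obtain ⟨ws, hws1, hws2⟩ := ih
    refine ⟨v :: ws, ?_, ?_⟩
    · intro w hw
      rcases List.mem_cons.1 hw with rfl | hw
      · exact hv2
      · exact hws1 w hw
    · intro f pre
      refine Relation.ReflTransGen.trans (star_context hv1 f pre us) ?_
      have h3 := hws2 f (pre ++ [v])
      simpa [StarRW] using h3

end RW

section Main
variable {R : TRS F}

/-- Main Lemma: normal form of a term is reached with at most one root step. -/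
theorem nf_root_dichotomy (hC : Confluent R) (hT : Terminating R) (hFC : FCclosed R)
    (hnv : ∀ e ∈ R, ¬ (e.1 : Term F).IsVar)
    {u w : Term F} {c : F} (hnf : NFof R u w) (hu : u.root = some c) :
    w.root = some c ∨
      ∃ (l₁ r₁ : Term F) (τ : Nat → Term F), (l₁, r₁) ∈ R ∧ l₁.root = some c ∧ w = r₁.subst τ := by
  obtain ⟨us, rfl⟩ : ∃ us, u = Term.app c us := by
    cases u with
    | var n => simp [Term.root] at hu
    | app d ts => exact ⟨ts, by simp [Term.root] at hu; rw [hu]⟩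
  obtain ⟨ws, hws1, hws2⟩ := exists_nf_list hT us
  have hstar : StarRW R (Term.app c us) (Term.app c ws) := by simpa using hws2 c []
  -- w is also the normal form of `app c ws`
  have hnf' : NFof R (Term.app c ws) w := by
    obtain ⟨z, hz1, hz2⟩ := hC (Term.app c us) w (Term.app c ws) hnf.1 hstar
    have hwz : w = z := star_of_nf hnf.2 hz1
    exact ⟨by rw [hwz]; exact hz2, hnf.2⟩
  by_cases hNF : NormalForm R (Term.app c ws)
  · left
    rw [← star_of_nf hNF hnf'.1]
    rfl
  · right
    have heps : EpsIrreducible R (Term.app c ws) := by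
      intro p x hx hp
      cases p with
      | nil => exact absurd rfl hp
      | cons i q =>
        obtain ⟨f', ts', wi, heq, hget, hs⟩ := subtermAt_cons hx
        have hwi : wi ∈ ws := by
          cases heq
          exact List.mem_of_getElem? hget
        exact nf_subterm hs (hws1 _ hwi)
    have hstep := hFC _ ⟨heps, hNF⟩ w hnf'
    obtain ⟨ρ, hρ, σ, p, hsub, hrep⟩ := hstep
    cases p with
    | cons i q =>
      -- a redex strictly below the root: contradiction with EpsIrreducible
      exfalso
      have hnfsub : NormalForm R (ρ.1.subst σ) := heps _ _ hsub (by simp)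
      exact hnfsub (ρ.2.subst σ) ⟨ρ, hρ, σ, [], SubtermAt.here _, ReplaceAt.here _ _⟩
    | nil =>
      have heq := subtermAt_nil hsub
      have heqw := replaceAt_nil hrep
      obtain ⟨f', ls, hl⟩ := Term.not_isVar_iff.1 (hnv ρ hρ)
      refine ⟨ρ.1, ρ.2, σ, hρ, ?_, heqw⟩
      have : (ρ.1.subst σ).root = some c := by rw [← heq]; rfl
      rwa [Term.root_subst (Term.not_isVar_iff.2 ⟨f', ls, hl⟩) σ] at this

/-- first root step decomposition -/
theorem first_root_step {s t : Term F} (h : Plus R s t) (hne : s.root ≠ t.root) :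
    ∃ (l₂ r₂ : Term F) (σ : Nat → Term F), (l₂, r₂) ∈ R ∧ (l₂.subst σ).root = s.root ∧
      Plus R s (r₂.subst σ) ∧ StarRW R (r₂.subst σ) t := by
  induction h using Relation.TransGen.head_induction_on with
  | single hstep =>
    rcases step_root_or_eq hstep with ⟨ρ, hρ, σ, h1, h2⟩ | heq
    · exact ⟨ρ.1, ρ.2, σ, hρ, by rw [← h1], by rw [← h2]; exact Relation.TransGen.single hstep,
        by rw [← h2] at *; exact Relation.ReflTransGen.refl⟩
    · exact absurd heq hne
  | head hstep hplus ih =>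
    rename_i a b
    rcases step_root_or_eq hstep with ⟨ρ, hρ, σ, h1, h2⟩ | heq
    · exact ⟨ρ.1, ρ.2, σ, hρ, by rw [← h1],
        by rw [← h2]; exact Relation.TransGen.single hstep,
        by rw [← h2]; exact hplus.to_reflTransGen⟩
    · have hbt : b.root ≠ t.root := by rw [← heq]; exact hne
      obtain ⟨l₂, r₂, σ, h1, h2, h3, h4⟩ := ih hbt
      exact ⟨l₂, r₂, σ, h1, by rw [h2, ← heq], Relation.TransGen.head hstep h3, h4⟩

end Main

section MGU

/-- occurs check: size of instantiated variable bounded by size of instance -/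
theorem tsize_subst_le {x : Nat} {v : Term F} (h : x ∈ v.varsL) (τ : Nat → Term F) :
    (τ x).tsize ≤ (v.subst τ).tsize := by
  induction v using Term.my_ind with
  | hv y =>
    simp only [Term.varsL, List.mem_singleton] at h
    subst h
    simp [Term.subst]
  | ha f ts ih =>
    rw [Term.varsL_app] at h
    obtain ⟨l, hl, hxl⟩ := List.mem_flatten.1 h
    obtain ⟨t, ht, rfl⟩ := List.mem_map.1 hl
    calc (τ x).tsize ≤ (t.subst τ).tsize := ih t ht hxl
    _ ≤ ((Term.app f ts).subst τ).tsize := by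
        rw [Term.subst_app, Term.tsize_app]
        have := List.single_le_sum (l := (ts.map (·.subst τ)).map Term.tsize) (by simp)
          (t.subst τ).tsize (List.mem_map_of_mem (List.mem_map_of_mem ht))
        omega

theorem no_unify_occurs {x : Nat} {f : F} {ts : List (Term F)}
    (h : x ∈ (Term.app f ts).varsL) (τ : Nat → Term F) :
    τ x ≠ (Term.app f ts).subst τ := by
  intro heq
  rw [Term.varsL_app] at h
  obtain ⟨l, hl, hxl⟩ := List.mem_flatten.1 h
  obtain ⟨t, ht, rfl⟩ := List.mem_map.1 hl
  have h1 : (τ x).tsize ≤ (t.subst τ).tsize := tsize_subst_le hxl τ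
  have h2 : (t.subst τ).tsize < ((Term.app f ts).subst τ).tsize := by
    rw [Term.subst_app, Term.tsize_app]
    have := List.single_le_sum (l := (ts.map (·.subst τ)).map Term.tsize) (by simp)
      (t.subst τ).tsize (List.mem_map_of_mem (List.mem_map_of_mem ht))
    omega
  rw [heq] at h1
  omega

def UnifiesL (τ : Nat → Term F) (ps : List (Term F × Term F)) : Prop :=
  ∀ p ∈ ps, Unifies τ p.1 p.2

def IsMGUL (σ : Nat → Term F) (ps : List (Term F × Term F)) : Prop :=
  UnifiesL σ ps ∧ ∀ τ, UnifiesL τ ps → ∃ δ, ∀ x, τ x = (σ x).subst δ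

def varsP (ps : List (Term F × Term F)) : List Nat :=
  (ps.map fun p => p.1.varsL ++ p.2.varsL).flatten

def sizeP (ps : List (Term F × Term F)) : Nat :=
  (ps.map fun p => p.1.tsize + p.2.tsize).sum

theorem mem_varsP {k : Nat} {ps : List (Term F × Term F)} :
    k ∈ varsP ps ↔ ∃ p ∈ ps, k ∈ p.1.varsL ∨ k ∈ p.2.varsL := by
  unfold varsP
  rw [List.mem_flatten]
  constructor
  · rintro ⟨l, hl, hk⟩
    obtain ⟨p, hp, rfl⟩ := List.mem_map.1 hl
    exact ⟨p, hp, List.mem_append.1 hk⟩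
  · rintro ⟨p, hp, hk⟩
    exact ⟨_, List.mem_map_of_mem hp, List.mem_append.2 hk⟩

theorem sizeP_cons (p : Term F × Term F) (ps : List (Term F × Term F)) :
    sizeP (p :: ps) = p.1.tsize + p.2.tsize + sizeP ps := by
  simp [sizeP]

/-- the single-binding substitution -/
def upd (x : Nat) (v : Term F) : Nat → Term F := fun n => if n = x then v else Term.var n

theorem upd_self (x : Nat) (v : Term F) : upd x v x = v := if_pos rfl

theorem subst_upd_eq_self {x : Nat} {v : Term F} (hx : x ∉ v.varsL) :
    v.subst (upd x v) = v :=
  Term.subst_id_on fun n hn => if_neg (fun (h : n = x) => hx (h ▸ hn))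

theorem upd_comp_eq {x : Nat} {v : Term F} {τ : Nat → Term F}
    (hτ : τ x = v.subst τ) : (fun n => ((upd x v) n).subst τ) = τ := by
  funext n
  by_cases hn : n = x
  · subst hn; rw [upd_self, ← hτ]
  · simp [upd, hn, Term.subst]

theorem Term.subst_var_eq (σ : Nat → Term F) (n : Nat) :
    (Term.var n).subst σ = σ n := by simp [Term.subst]

theorem unifies_map_pair {σ₁ σ₂ : Nat → Term F} {a b : Term F}
    (h : Unifies σ₂ (a.subst σ₁) (b.subst σ₁)) :
    Unifies (fun n => (σ₁ n).subst σ₂) a b := by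
  unfold Unifies at *
  rw [← Term.subst_subst, ← Term.subst_subst]
  exact h

theorem unifies_var_head {x : Nat} {v : Term F} {σ₂ : Nat → Term F} (hx : x ∉ v.varsL) :
    Unifies (fun n => ((upd x v) n).subst σ₂) (Term.var x) v := by
  unfold Unifies
  rw [Term.subst_var_eq]
  show (upd x v x).subst σ₂ = _
  rw [upd_self, ← Term.subst_subst, subst_upd_eq_self hx]

/-- lifting an mgu of the eliminated system back -/
theorem var_elim_mgu {x : Nat} {v : Term F} (hx : x ∉ v.varsL)
    {ps' : List (Term F × Term F)} {σ₂ : Nat → Term F}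
    (h2 : IsMGUL σ₂ (ps'.map fun p => (p.1.subst (upd x v), p.2.subst (upd x v)))) :
    IsMGUL (fun n => ((upd x v) n).subst σ₂) ((Term.var x, v) :: ps') := by
  constructor
  · intro p hp
    rcases List.mem_cons.1 hp with rfl | hp
    · exact unifies_var_head hx
    · exact unifies_map_pair (h2.1 (p.1.subst (upd x v), p.2.subst (upd x v))
        (List.mem_map_of_mem hp))
  · intro τ hτ
    have hhead : τ x = v.subst τ := by
      have := hτ (Term.var x, v) (List.mem_cons_self)
      simpa [Unifies, Term.subst] using this
    have hcomp := upd_comp_eq hhead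
    have hτ'' : UnifiesL τ (ps'.map fun p => (p.1.subst (upd x v), p.2.subst (upd x v))) := by
      intro p hp
      obtain ⟨q, hq, rfl⟩ := List.mem_map.1 hp
      show (q.1.subst (upd x v)).subst τ = (q.2.subst (upd x v)).subst τ
      rw [Term.subst_subst, Term.subst_subst, hcomp]
      exact hτ q (List.mem_cons_of_mem _ hq)
    obtain ⟨δ, hδ⟩ := h2.2 τ hτ''
    refine ⟨δ, fun n => ?_⟩
    have hfun : τ = fun k => (σ₂ k).subst δ := funext hδ
    calc τ n = ((upd x v) n).subst τ := (congrFun hcomp n).symm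
    _ = ((upd x v) n).subst (fun k => (σ₂ k).subst δ) := by rw [hfun]
    _ = (((upd x v) n).subst σ₂).subst δ := (Term.subst_subst _ _ _).symm

theorem mgul_swap_head {σ : Nat → Term F} {a b : Term F} {ps : List (Term F × Term F)}
    (h : IsMGUL σ ((a, b) :: ps)) : IsMGUL σ ((b, a) :: ps) := by
  have key : ∀ (τ : Nat → Term F), UnifiesL τ ((b, a) :: ps) → UnifiesL τ ((a, b) :: ps) := by
    intro τ hτ p hp
    rcases List.mem_cons.1 hp with rfl | hp
    · exact (hτ (b, a) (List.mem_cons_self)).symm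
    · exact hτ p (List.mem_cons_of_mem _ hp)
  refine ⟨fun p hp => ?_, fun τ hτ => h.2 τ (key τ hτ)⟩
  rcases List.mem_cons.1 hp with rfl | hp
  · exact (h.1 (a, b) (List.mem_cons_self)).symm
  · exact h.1 p (List.mem_cons_of_mem _ hp)

theorem sizeP_zip_le : ∀ (us vs : List (Term F)),
    sizeP (us.zip vs) ≤ (us.map Term.tsize).sum + (vs.map Term.tsize).sum := by
  intro us
  induction us with
  | nil => intro vs; simp [sizeP]
  | cons u us ih =>
    intro vs
    cases vs with
    | nil => simp [sizeP]
    | cons v vs =>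
      have := ih vs
      simp only [List.zip_cons_cons, sizeP_cons, List.map_cons, List.sum_cons]
      omega

theorem unify_zip {h k : Term F → Term F} : ∀ {us vs : List (Term F)},
    us.map h = vs.map k → ∀ p ∈ us.zip vs, h p.1 = k p.2 := by
  intro us
  induction us with
  | nil => intro vs _ p hp; simp at hp
  | cons u us ih =>
    intro vs heq p hp
    cases vs with
    | nil => simp at heq
    | cons v vs =>
      simp only [List.map_cons, List.cons.injEq] at heq
      rcases List.mem_cons.1 (by simpa using hp) with rfl | hp'
      · exact heq.1
      · exact ih heq.2 p hp'

theorem map_eq_of_zip {h k : Term F → Term F} : ∀ {us vs : List (Term F)},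
    us.length = vs.length → (∀ p ∈ us.zip vs, h p.1 = k p.2) → us.map h = vs.map k := by
  intro us
  induction us with
  | nil =>
    intro vs hl _
    cases vs with
    | nil => rfl
    | cons v vs => simp at hl
  | cons u us ih =>
    intro vs hl hz
    cases vs with
    | nil => simp at hl
    | cons v vs =>
      simp only [List.map_cons]
      rw [hz (u, v) (by simp), ih (by simpa using hl) fun p hp => hz p (by simp [hp])]

end MGU

section MGUMain

theorem Term.tsize_var (n : Nat) : (Term.var n : Term F).tsize = 1 := by
  simp [Term.tsize]

theorem identity_mgul (ps : List (Term F × Term F)) (h : UnifiesL Term.var ps) :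
    IsMGUL (Term.var (F := F)) ps :=
  ⟨h, fun τ _ => ⟨τ, fun x => (Term.subst_var_eq τ x).symm⟩⟩

theorem sizeP_append (as bs : List (Term F × Term F)) :
    sizeP (as ++ bs) = sizeP as + sizeP bs := by
  simp [sizeP]

theorem varsP_tail_subset {p : Term F × Term F} {ps : List (Term F × Term F)} :
    ∀ k ∈ varsP ps, k ∈ varsP (p :: ps) := by
  intro k hk
  obtain ⟨q, hq, hor⟩ := mem_varsP.1 hk
  exact mem_varsP.2 ⟨q, List.mem_cons_of_mem _ hq, hor⟩

theorem varsP_swap_mem {a b : Term F} {ps : List (Term F × Term F)} (k : Nat) :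
    k ∈ varsP ((a, b) :: ps) ↔ k ∈ varsP ((b, a) :: ps) := by
  rw [mem_varsP, mem_varsP]
  constructor <;> rintro ⟨q, hq, hor⟩ <;> rcases List.mem_cons.1 hq with rfl | hq
  · exact ⟨(b, a), List.mem_cons_self, hor.symm⟩
  · exact ⟨q, List.mem_cons_of_mem _ hq, hor⟩
  · exact ⟨(a, b), List.mem_cons_self, hor.symm⟩
  · exact ⟨q, List.mem_cons_of_mem _ hq, hor⟩

theorem varsP_swap_card (a b : Term F) (ps : List (Term F × Term F)) :
    (varsP ((b, a) :: ps)).toFinset.card = (varsP ((a, b) :: ps)).toFinset.card := by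
  apply congrArg
  apply Finset.ext
  intro k
  rw [List.mem_toFinset, List.mem_toFinset]
  exact (varsP_swap_mem k).symm

/-- the variable elimination step of unification -/
theorem varelim_exists {x : Nat} {w : Term F} (hx : x ∉ w.varsL)
    (ps' : List (Term F × Term F))
    (IH : ∀ qs : List (Term F × Term F),
      (varsP qs).toFinset.card < (varsP ((Term.var x, w) :: ps')).toFinset.card →
      (∃ τ, UnifiesL τ qs) → ∃ σ, IsMGUL σ qs)
    (hun : ∃ τ, UnifiesL τ ((Term.var x, w) :: ps')) :
    ∃ σ, IsMGUL σ ((Term.var x, w) :: ps') := by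
  obtain ⟨τ1, hτ1⟩ := hun
  set ps'' := ps'.map (fun p => (p.1.subst (upd x w), p.2.subst (upd x w))) with hps''
  have hxin : x ∈ (varsP ((Term.var x, w) :: ps')).toFinset := by
    rw [List.mem_toFinset]
    exact mem_varsP.2 ⟨_, List.mem_cons_self, Or.inl (by simp [Term.varsL])⟩
  have hsubset : (varsP ps'').toFinset ⊆
      ((varsP ((Term.var x, w) :: ps')).toFinset).erase x := by
    intro k hk
    rw [List.mem_toFinset] at hk
    obtain ⟨q, hq, hor⟩ := mem_varsP.1 hk
    obtain ⟨q0, hq0, rfl⟩ := List.mem_map.1 hq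
    have key : ∀ a : Term F, k ∈ (a.subst (upd x w)).varsL →
        (k ∈ a.varsL ∧ k ≠ x) ∨ k ∈ w.varsL := by
      intro a hka
      obtain ⟨mm, hmm, hkm⟩ := Term.mem_varsL_subst.1 hka
      by_cases hmx : mm = x
      · subst hmx
        right
        rwa [upd_self] at hkm
      · left
        have heq : upd x w mm = Term.var mm := if_neg hmx
        rw [heq] at hkm
        simp [Term.varsL] at hkm
        subst hkm
        exact ⟨hmm, hmx⟩
    have hknx : k ≠ x ∧ k ∈ varsP ((Term.var x, w) :: ps') := by
      rcases hor with h | h <;> rcases key _ h with ⟨h1, h2⟩ | h1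
      · exact ⟨h2, mem_varsP.2 ⟨q0, List.mem_cons_of_mem _ hq0, Or.inl h1⟩⟩
      · exact ⟨fun hkx => hx (hkx ▸ h1), mem_varsP.2 ⟨_, List.mem_cons_self, Or.inr h1⟩⟩
      · exact ⟨h2, mem_varsP.2 ⟨q0, List.mem_cons_of_mem _ hq0, Or.inr h1⟩⟩
      · exact ⟨fun hkx => hx (hkx ▸ h1), mem_varsP.2 ⟨_, List.mem_cons_self, Or.inr h1⟩⟩
    exact Finset.mem_erase.2 ⟨hknx.1, List.mem_toFinset.2 hknx.2⟩
  have hcardlt : (varsP ps'').toFinset.card <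
      (varsP ((Term.var x, w) :: ps')).toFinset.card := by
    have h1 := Finset.card_le_card hsubset
    have h2 := Finset.card_erase_of_mem hxin
    have h3 := Finset.card_pos.2 ⟨x, hxin⟩
    omega
  have hτx : τ1 x = w.subst τ1 := by
    have h4 := hτ1 (Term.var x, w) (List.mem_cons_self)
    unfold Unifies at h4
    rwa [Term.subst_var_eq] at h4
  have hun'' : ∃ τ, UnifiesL τ ps'' := by
    refine ⟨τ1, fun p hp => ?_⟩
    obtain ⟨q, hq, rfl⟩ := List.mem_map.1 hp
    show (q.1.subst (upd x w)).subst τ1 = (q.2.subst (upd x w)).subst τ1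
    rw [Term.subst_subst, Term.subst_subst, upd_comp_eq hτx]
    exact hτ1 q (List.mem_cons_of_mem _ hq)
  obtain ⟨σ₂, hσ₂⟩ := IH ps'' hcardlt hun''
  exact ⟨_, var_elim_mgu hx hσ₂⟩

theorem existsMGUL (n : Nat) : ∀ (m : Nat) (ps : List (Term F × Term F)),
    (varsP ps).toFinset.card ≤ n → sizeP ps ≤ m → (∃ τ, UnifiesL τ ps) →
    ∃ σ, IsMGUL σ ps := by
  induction n using Nat.strong_induction_on with
  | _ n ihn =>
  intro m
  induction m using Nat.strong_induction_on with
  | _ m ihm =>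
  intro ps hcard hsize hun
  match ps with
  | [] =>
    exact ⟨Term.var, identity_mgul [] (fun p hp => by simp at hp)⟩
  | (u, v) :: ps' =>
    obtain ⟨τ0, hτ0⟩ := hun
    have hsz : sizeP ((u, v) :: ps') = u.tsize + v.tsize + sizeP ps' := sizeP_cons _ _
    have hhead : Unifies τ0 u v := hτ0 (u, v) (List.mem_cons_self)
    have htail : UnifiesL τ0 ps' := fun p hp => hτ0 p (List.mem_cons_of_mem _ hp)
    have htailcard : (varsP ps').toFinset.card ≤ n := by
      refine le_trans (Finset.card_le_card ?_) hcard
      intro k hk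
      rw [List.mem_toFinset] at hk ⊢
      exact varsP_tail_subset k hk
    rcases u with x | ⟨fu, us⟩
    · -- u is a variable
      by_cases hxv : Term.var x = v
      · -- trivial equation
        have hmlt : sizeP ps' < m := by
          have h5 := (Term.var x : Term F).tsize_pos
          have h6 := v.tsize_pos
          omega
        obtain ⟨σ, hσ⟩ := ihm (sizeP ps') hmlt ps' htailcard le_rfl ⟨τ0, htail⟩
        refine ⟨σ, fun p hp => ?_, fun τ hτ => hσ.2 τ (fun p hp => hτ p (List.mem_cons_of_mem _ hp))⟩
        rcases List.mem_cons.1 hp with rfl | hp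
        · show (Term.var x).subst σ = v.subst σ
          rw [← hxv]
        · exact hσ.1 p hp
      · by_cases hocc : x ∈ v.varsL
        · -- occurs check failure: no unifier, contradiction
          exfalso
          rcases v with y | ⟨fv, vs⟩
          · simp [Term.varsL] at hocc
            exact hxv (by rw [hocc])
          · refine no_unify_occurs hocc τ0 ?_
            have h7 := hhead
            unfold Unifies at h7
            rwa [Term.subst_var_eq] at h7
        · -- variable elimination
          refine varelim_exists hocc ps' (fun qs hlt hq => ?_) ⟨τ0, ?_⟩
          · exact ihn _ (lt_of_lt_of_le hlt hcard) (sizeP qs) qs le_rfl le_rfl hq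
          · intro p hp
            rcases List.mem_cons.1 hp with rfl | hp
            · exact hhead
            · exact htail p hp
    · rcases v with y | ⟨fv, vs⟩
      · -- v is a variable: symmetric case
        have hocc : y ∉ (Term.app fu us).varsL := by
          intro hocc
          refine no_unify_occurs hocc τ0 ?_
          have h7 := hhead
          unfold Unifies at h7
          rw [Term.subst_var_eq] at h7
          exact h7.symm
        have hswap : ∃ σ, IsMGUL σ ((Term.var y, Term.app fu us) :: ps') := by
          refine varelim_exists hocc ps' (fun qs hlt hq => ?_) ⟨τ0, ?_⟩
          · rw [varsP_swap_card] at hlt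
            exact ihn _ (lt_of_lt_of_le hlt hcard) (sizeP qs) qs le_rfl le_rfl hq
          · intro p hp
            rcases List.mem_cons.1 hp with rfl | hp
            · exact hhead.symm
            · exact htail p hp
        obtain ⟨σ, hσ⟩ := hswap
        exact ⟨σ, mgul_swap_head hσ⟩
      · -- both apps: decompose
        have h7 := hhead
        unfold Unifies at h7
        rw [Term.subst_app, Term.subst_app] at h7
        have hff : fu = fv := by injection h7
        have hmaps : us.map (·.subst τ0) = vs.map (·.subst τ0) := by injection h7
        subst hff
        have hlen : us.length = vs.length := by
          have h8 := congrArg List.length hmaps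
          simpa using h8
        have hun'' : UnifiesL τ0 (us.zip vs ++ ps') := by
          intro p hp
          rcases List.mem_append.1 hp with hp | hp
          · exact unify_zip hmaps p hp
          · exact htail p hp
        have hcard'' : (varsP (us.zip vs ++ ps')).toFinset.card ≤ n := by
          refine le_trans (Finset.card_le_card ?_) hcard
          intro k hk
          rw [List.mem_toFinset] at hk ⊢
          obtain ⟨q, hq, hor⟩ := mem_varsP.1 hk
          rcases List.mem_append.1 hq with hq | hq
          · obtain ⟨ha, hb⟩ := List.of_mem_zip hq
            refine mem_varsP.2 ⟨(Term.app fu us, Term.app fu vs), List.mem_cons_self, ?_⟩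
            rcases hor with h | h
            · exact Or.inl (by
                rw [Term.varsL_app]
                exact List.mem_flatten.2 ⟨q.1.varsL, List.mem_map_of_mem ha, h⟩)
            · exact Or.inr (by
                rw [Term.varsL_app]
                exact List.mem_flatten.2 ⟨q.2.varsL, List.mem_map_of_mem hb, h⟩)
          · exact mem_varsP.2 ⟨q, List.mem_cons_of_mem _ hq, hor⟩
        have hsize'' : sizeP (us.zip vs ++ ps') < m := by
          have h9 := sizeP_zip_le us vs
          rw [sizeP_append]
          rw [Term.tsize_app, Term.tsize_app] at hsz
          omega
        obtain ⟨σ, hσ⟩ := ihm _ hsize'' (us.zip vs ++ ps') hcard'' le_rfl ⟨τ0, hun''⟩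
        have decomp : ∀ (τ : Nat → Term F), UnifiesL τ ((Term.app fu us, Term.app fu vs) :: ps') →
            UnifiesL τ (us.zip vs ++ ps') := by
          intro τ hτ p hp
          have hh := hτ (Term.app fu us, Term.app fu vs) (List.mem_cons_self)
          unfold Unifies at hh
          rw [Term.subst_app, Term.subst_app] at hh
          have hmm : us.map (·.subst τ) = vs.map (·.subst τ) := by injection hh
          rcases List.mem_append.1 hp with hp | hp
          · exact unify_zip hmm p hp
          · exact hτ p (List.mem_cons_of_mem _ hp)
        refine ⟨σ, fun p hp => ?_, fun τ hτ => hσ.2 τ (decomp τ hτ)⟩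
        rcases List.mem_cons.1 hp with rfl | hp
        · show (Term.app fu us).subst σ = (Term.app fu vs).subst σ
          rw [Term.subst_app, Term.subst_app]
          congr 1
          exact map_eq_of_zip hlen (fun p hp => hσ.1 p (List.mem_append_left _ hp))
        · exact hσ.1 p (List.mem_append_right _ hp)

theorem exists_isMGU {u v : Term F} (h : ∃ τ, Unifies τ u v) : ∃ σ, IsMGU σ u v := by
  obtain ⟨τ, hτ⟩ := h
  have hun : ∃ τ, UnifiesL τ [(u, v)] := ⟨τ, fun p hp => by
    rcases List.mem_cons.1 hp with rfl | hp
    · exact hτ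
    · simp at hp⟩
  obtain ⟨σ, hσ⟩ := existsMGUL ((varsP [(u, v)]).toFinset.card) (sizeP [(u, v)]) [(u, v)]
    le_rfl le_rfl hun
  refine ⟨σ, hσ.1 (u, v) (List.mem_cons_self), fun τ' hτ' => hσ.2 τ' ?_⟩
  intro p hp
  rcases List.mem_cons.1 hp with rfl | hp
  · exact hτ'
  · simp at hp

end MGUMain

section Assembly

theorem foldr_max_lt (l : List Nat) : ∀ n ∈ l, n < l.foldr max 0 + 1 := by
  induction l with
  | nil => intro n hn; simp at hn
  | cons a l ih =>
    intro n hn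
    rcases List.mem_cons.1 hn with rfl | hn
    · have := le_max_left n (l.foldr max 0)
      simp only [List.foldr]
      omega
    · have h1 := ih n hn
      have h2 := le_max_right a (l.foldr max 0)
      simp only [List.foldr]
      omega

theorem root_some_not_isVar {t : Term F} {c : F} (h : t.root = some c) : ¬ t.IsVar := by
  cases t with
  | var n => simp [Term.root] at h
  | app f ts => simp [Term.IsVar]

/-- from two rules with a common rhs instance, produce the RHS critical pair -/
theorem rhs_pair_mem {R : TRS F} {l₅ r₅ l₄ r₄ : Term F} (h5 : (l₅, r₅) ∈ R)
    (h4 : (l₄, r₄) ∈ R) {τ₅ τ₄ : Nat → Term F} (heq : r₅.subst τ₅ = r₄.subst τ₄)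
    (h5v : ¬ l₅.IsVar) (h4v : ¬ l₄.IsVar) (hroot : l₅.root ≠ l₄.root) :
    ∃ e ∈ RHSset R, e.1.root = l₅.root ∧ e.2.root = l₄.root := by
  set M := r₅.varsL.foldr max 0 + 1 with hM
  set ρ : Nat → Term F := fun n => Term.var (n + M) with hρ
  have hren : IsRenaming ρ := ⟨fun n => n + M, by intro a b hab; have h : a + M = b + M := hab; omega, fun n => rfl⟩
  set τ : Nat → Term F := fun k => if k < M then τ₅ k else τ₄ (k - M) with hτdef
  have hu : Unifies τ r₅ (r₄.subst ρ) := by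
    unfold Unifies
    have h1 : r₅.subst τ = r₅.subst τ₅ :=
      Term.subst_congr fun n hn => if_pos (foldr_max_lt _ n hn)
    have h2 : (r₄.subst ρ).subst τ = r₄.subst τ₄ := by
      rw [Term.subst_subst]
      have h3 : (fun n => (ρ n).subst τ) = τ₄ := by
        funext n
        show (Term.var (n + M)).subst τ = τ₄ n
        rw [Term.subst_var_eq]
        show (if n + M < M then τ₅ (n + M) else τ₄ (n + M - M)) = τ₄ n
        rw [if_neg (by omega)]
        congr 1
        omega
      rw [h3]
    rw [h1, h2, heq]
  obtain ⟨σ₀, hσ₀⟩ := exists_isMGU ⟨τ, hu⟩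
  obtain ⟨f4, ts4, rfl⟩ := Term.not_isVar_iff.1 h4v
  have hl4ρv : ¬ ((Term.app f4 ts4).subst ρ).IsVar := by
    rw [Term.subst_app]
    simp [Term.IsVar]
  have he1root : (l₅.subst σ₀).root = l₅.root := Term.root_subst h5v σ₀
  have he2root : (((Term.app f4 ts4).subst ρ).subst σ₀).root = (Term.app f4 ts4).root := by
    rw [Term.root_subst hl4ρv σ₀, Term.root_subst h4v ρ]
  have hne : l₅.subst σ₀ ≠ ((Term.app f4 ts4).subst ρ).subst σ₀ := by
    intro hE
    exact hroot (by rw [← he1root, hE, he2root])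
  refine ⟨(l₅.subst σ₀, ((Term.app f4 ts4).subst ρ).subst σ₀),
    Set.mem_union_right _ ?_, he1root, he2root⟩
  exact ⟨l₅, r₅, Term.app f4 ts4, r₄, ρ, σ₀, h5, h4, hren, hσ₀, hne, rfl⟩

/-- the main theorem, in a form suitable for well-founded induction -/
theorem key_no_reversals {R : TRS F} (hlm : LMSystem R) :
    ∀ s : Term F, ∀ (l r : Term F) (f g : F), (l, r) ∈ R → l.root = some f →
      r.root = some g → f ≠ g → ∀ t : Term F, s.root = some g → t.root = some f →
      ¬ Plus R s t := by
  obtain ⟨hC, hT⟩ := hlm.convergent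
  obtain ⟨qd1, qd2, qd3⟩ := hlm.quasiDet
  have hRsub : ∀ e : Rule F, e ∈ R → e ∈ RHSset R := fun e he => Or.inl he
  have hnv : ∀ e ∈ R, ¬ (e.1 : Term F).IsVar := fun e he => (qd1 e (hRsub e he)).1
  have hnv2 : ∀ e ∈ R, ¬ (e.2 : Term F).IsVar := fun e he => (qd1 e (hRsub e he)).2
  have hwf : WellFounded (fun a b : Term F => Plus R b a) :=
    Subrelation.wf (fun {a b} h => Relation.transGen_swap.mpr h) hT.transGen
  intro s
  induction s using hwf.induction with
  | _ s IH =>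
  intro l r f g hrule hl hr hfg t hs ht hplus
  obtain ⟨w, hw⟩ := exists_nf hT t
  have hsw : NFof R s w := ⟨Relation.ReflTransGen.trans hplus.to_reflTransGen hw.1, hw.2⟩
  by_cases hwg : w.root = some g
  · -- the normal form has root g: use the first root step and the induction hypothesis
    have hne : s.root ≠ t.root := by
      rw [hs, ht]
      exact fun h => hfg (Option.some.inj h).symm
    obtain ⟨l₂, r₂, σ, h2R, h2root, h2plus, h2star⟩ := first_root_step hplus hne
    have h2l_nv : ¬ l₂.IsVar := hnv _ h2R
    have h2r_nv : ¬ r₂.IsVar := hnv2 _ h2R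
    have hl₂root : l₂.root = some g := by
      rw [← Term.root_subst h2l_nv σ, h2root, hs]
    obtain ⟨h2c, hh⟩ : ∃ h2c, r₂.root = some h2c := by
      obtain ⟨f', ts, heq⟩ := Term.not_isVar_iff.1 h2r_nv
      exact ⟨f', by rw [heq]; rfl⟩
    have hgh : g ≠ h2c := by
      intro hE
      exact (qd2 _ (hRsub _ h2R)) (by rw [show ((l₂, r₂) : Rule F).1 = l₂ from rfl,
        show ((l₂, r₂) : Rule F).2 = r₂ from rfl, hl₂root, hh, hE])
    have ht₁root : (r₂.subst σ).root = some h2c := by rw [Term.root_subst h2r_nv σ, hh]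
    have ht₁w : StarRW R (r₂.subst σ) w := h2star.trans hw.1
    have ht₁w_plus : Plus R (r₂.subst σ) w := by
      refine plus_of_star_ne ht₁w ?_
      intro hE
      rw [hE, hwg] at ht₁root
      exact hgh (Option.some.inj ht₁root)
    exact IH (r₂.subst σ) h2plus l₂ r₂ g h2c h2R hl₂root hh hgh w ht₁root hwg ht₁w_plus
  · -- w.root ≠ some g : s-side dichotomy gives a rule (l₅, r₅) with l₅.root = g, w = r₅τ₅
    rcases nf_root_dichotomy hC hT hlm.forwardClosed hnv hsw hs with hwg' |
      ⟨l₅, r₅, τ₅, h5R, h5root, h5eq⟩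
    · exact hwg hwg'
    have h5r_nv : ¬ r₅.IsVar := hnv2 _ h5R
    by_cases hwf' : w.root = some f
    · -- rule (l₅, r₅) has root pair (g, f), contradicting quasi-determinism vs (l, r)
      have h5rr : r₅.root = some f := by
        rw [← Term.root_subst h5r_nv τ₅, ← h5eq, hwf']
      have hsim : RootPairSimilar (l, r) (l₅, r₅) :=
        Or.inr ⟨by rw [show ((l,r) : Rule F).1 = l from rfl, hl,
            show ((l₅,r₅) : Rule F).2 = r₅ from rfl, h5rr],
          by rw [show ((l,r) : Rule F).2 = r from rfl, hr,
            show ((l₅,r₅) : Rule F).1 = l₅ from rfl, h5root]⟩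
      by_cases hEq : ((l, r) : Rule F) = (l₅, r₅)
      · have hll : l = l₅ := congrArg Prod.fst hEq
        rw [hll, h5root] at hl
        exact hfg (Option.some.inj hl.symm)
      · exact qd3 _ (hRsub _ hrule) _ (hRsub _ h5R) hEq hsim
    · -- t-side dichotomy gives a rule (l₄, r₄) with l₄.root = f, w = r₄τ₄
      rcases nf_root_dichotomy hC hT hlm.forwardClosed hnv hw ht with hwf'' |
        ⟨l₄, r₄, τ₄, h4R, h4root, h4eq⟩
      · exact hwf' hwf''
      have heq45 : r₅.subst τ₅ = r₄.subst τ₄ := by rw [← h5eq, ← h4eq]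
      obtain ⟨e, heRHS, he1, he2⟩ := rhs_pair_mem h5R h4R heq45 (hnv _ h5R) (hnv _ h4R)
        (by rw [h5root, h4root]; exact fun hE => hfg (Option.some.inj hE).symm)
      have hsim : RootPairSimilar e (l, r) :=
        Or.inr ⟨by rw [he1, h5root, show ((l,r) : Rule F).2 = r from rfl, hr],
          by rw [he2, h4root, show ((l,r) : Rule F).1 = l from rfl, hl]⟩
      by_cases hEq : e = (l, r)
      · have h1 : e.1.root = some f := by rw [hEq]; exact hl
        rw [he1, h5root] at h1
        exact hfg (Option.some.inj h1).symm
      · exact qd3 _ heRHS _ (hRsub _ hrule) hEq hsim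

end Assembly


/-- if an LM-system has a rule with root pair `(f, g)`, `f ≠ g`, then no
term with root `g` reduces (in one or more steps) to a term with root `f`. -/
theorem no_reversals {F : Type} (R : TRS F) (hlm : LMSystem R)
    (l r : Term F) (hrule : (l, r) ∈ R)
    (f g : F) (hl : l.root = some f) (hr : r.root = some g) (hfg : f ≠ g) :
    ∀ s t : Term F, s.root = some g → t.root = some f → ¬ Plus R s t := by
  exact fun s t hs ht => key_no_reversals hlm s l r f g hrule hl hr hfg t hs ht
end
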